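/- arXiv:0801.3790 — 6 statements merged into one kernel-verified Lean document; each statement's English description precedes it below -/
import Mathlib

section
/- If C is a negative-weight directed cycle in G, then the point (-1/w(C))·χ(C) is a vertex (extreme point) of the polyhedron P(G,w); that is, it cannot be written as a proper convex combination of two distinct points of P(G,w). -/
open Finset

/-- A simple directed cycle, identified with its arc set: the arcs
`(f i, f (i+1))` of an injective map `f : ZMod (n+1) → V`. -/
def IsCycle {V : Type} [DecidableEq V] (C : Finset (V × V)) : Prop :=
  ∃ (n : ℕ) (f : ZMod (n + 1) → V), Function.Injective f ∧
    C = Finset.image (fun i => (f i, f (i + 1))) Finset.univ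

/-- Characteristic vector of an arc set. -/
def chi {V : Type} [DecidableEq V] (C : Finset (V × V)) : V × V → ℝ :=
  fun e => if e ∈ C then 1 else 0

/-- Membership in the polyhedron `P(G,w)` of negative-weight flows:
nonnegativity, support in `E`, flow conservation at every vertex, and
total weight `-1`. -/
def memP {V : Type} [Fintype V] [DecidableEq V] (E : Finset (V × V))
    (w : V × V → ℝ) (y : V × V → ℝ) : Prop :=
  (∀ e, 0 ≤ y e) ∧ (∀ e, e ∉ E → y e = 0) ∧
  (∀ u : V, ∑ e ∈ E.filter (fun e => e.1 = u), y e
          = ∑ e ∈ E.filter (fun e => e.2 = u), y e) ∧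
  (∑ e ∈ E, w e * y e = -1)

/-- A vertex (extreme point) of a convex set: a member which is not a proper
convex combination of two distinct members. -/
def IsVertexOf {α : Type*} [AddCommGroup α] [Module ℝ α] (P : Set α) (y : α) : Prop :=
  y ∈ P ∧ ¬ ∃ y₁ ∈ P, ∃ y₂ ∈ P, y₁ ≠ y₂ ∧
    ∃ t : ℝ, 0 < t ∧ t < 1 ∧ y = t • y₁ + (1 - t) • y₂

section Aux
variable {V : Type} [Fintype V] [DecidableEq V]

lemma sum_filter_support (E C : Finset (V × V)) (hCE : C ⊆ E)
    (p : V × V → Prop) [DecidablePred p] (g : V × V → ℝ)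
    (hg : ∀ e ∉ C, g e = 0) :
    ∑ e ∈ E.filter p, g e = ∑ e ∈ C.filter p, g e := by
  symm
  apply Finset.sum_subset (Finset.filter_subset_filter p hCE)
  intro e he hne
  exact hg e fun hec => hne (Finset.mem_filter.mpr ⟨hec, (Finset.mem_filter.mp he).2⟩)

lemma zmod_const {n : ℕ} (h : ZMod (n+1) → ℝ) (hstep : ∀ i, h i = h (i - 1)) :
    ∀ i, h i = h 0 := by
  have hnat : ∀ k : ℕ, h (k : ZMod (n+1)) = h 0 := by
    intro k
    induction k with
    | zero => simp
    | succ m ih =>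
      have := hstep ((m+1 : ℕ) : ZMod (n+1))
      push_cast at this
      simpa [this] using ih
  intro i
  have : ((i.val : ℕ) : ZMod (n+1)) = i := by
    simp [ZMod.natCast_val, ZMod.cast_id]
  rw [← this]; exact hnat i.val

/-- Key uniqueness lemma: a function supported on the cycle satisfying the
flow-conservation and weight constraints equals the canonical point. -/
lemma uniq (E : Finset (V × V)) (w : V × V → ℝ)
    (n : ℕ) (f : ZMod (n+1) → V) (hf : Function.Injective f)
    (C : Finset (V × V))
    (hCeq : C = Finset.image (fun i => (f i, f (i + 1))) Finset.univ)
    (hCE : C ⊆ E)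
    (g : V × V → ℝ) (hg : ∀ e ∉ C, g e = 0)
    (hcons : ∀ u : V, ∑ e ∈ E.filter (fun e => e.1 = u), g e
          = ∑ e ∈ E.filter (fun e => e.2 = u), g e)
    (hw : ∑ e ∈ E, w e * g e = -1) (hs : ∑ e ∈ C, w e ≠ 0) :
    g = fun e => (-1 / ∑ e ∈ C, w e) * chi C e := by
  set ι : ZMod (n+1) → V × V := fun i => (f i, f (i + 1)) with hι
  have hinj : Function.Injective ι := fun a b h => hf (congrArg Prod.fst h)
  have hinj' : ∀ a ∈ (Finset.univ : Finset (ZMod (n+1))), ∀ b ∈ Finset.univ,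
      ι a = ι b → a = b := fun a _ b _ h => hinj h
  have hmem : ∀ i, ι i ∈ C := by
    intro i; rw [hCeq]; exact Finset.mem_image_of_mem _ (Finset.mem_univ i)
  -- step: g (ι i) = g (ι (i-1))
  have hstep : ∀ i₀, g (ι i₀) = g (ι (i₀ - 1)) := by
    intro i₀
    have h1 : ∑ e ∈ E.filter (fun e => e.1 = f i₀), g e = g (ι i₀) := by
      rw [sum_filter_support E C hCE _ g hg, hCeq, Finset.filter_image,
        Finset.sum_image (fun a _ b _ h => hinj h)]
      have : Finset.univ.filter (fun i => (ι i).1 = f i₀) = {i₀} := by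
        ext i; simp [hι, hf.eq_iff]
      rw [this, Finset.sum_singleton]
    have h2 : ∑ e ∈ E.filter (fun e => e.2 = f i₀), g e = g (ι (i₀ - 1)) := by
      rw [sum_filter_support E C hCE _ g hg, hCeq, Finset.filter_image,
        Finset.sum_image (fun a _ b _ h => hinj h)]
      have : Finset.univ.filter (fun i => (ι i).2 = f i₀) = {i₀ - 1} := by
        ext i; simp [hι, hf.eq_iff, eq_sub_iff_add_eq]
      rw [this, Finset.sum_singleton]
    rw [← h1, ← h2]; exact hcons (f i₀)
  have hconst : ∀ i, g (ι i) = g (ι 0) := zmod_const (fun i => g (ι i)) hstep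
  -- weight sum
  have hsumC : ∑ e ∈ E, w e * g e = ∑ e ∈ C, w e * g e := by
    symm
    apply Finset.sum_subset hCE
    intro e _ he; rw [hg e he, mul_zero]
  have hCsum : ∑ e ∈ C, w e * g e = g (ι 0) * ∑ e ∈ C, w e := by
    rw [hCeq, Finset.sum_image hinj', Finset.sum_image hinj', Finset.mul_sum]
    apply Finset.sum_congr rfl
    intro i _
    rw [hconst i]; ring
  have hval : g (ι 0) = -1 / ∑ e ∈ C, w e := by
    have : g (ι 0) * ∑ e ∈ C, w e = -1 := by rw [← hCsum, ← hsumC, hw]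
    field_simp at this ⊢
    linarith [this]
  funext e
  by_cases he : e ∈ C
  · rw [hCeq] at he
    obtain ⟨i, _, hi⟩ := Finset.mem_image.mp he
    have : chi C e = 1 := by
      simp [chi, hCeq ▸ he]
    rw [this, mul_one, ← hi, hconst i, hval]
  · rw [hg e he]
    simp [chi, he]

end Aux

/-- a negative cycle gives a vertex of `P(G,w)`. -/
theorem stmt_1 {V : Type} [Fintype V] [DecidableEq V]
    (E : Finset (V × V)) (w : V × V → ℝ) (C : Finset (V × V))
    (hC : IsCycle C) (hCE : C ⊆ E) (hneg : ∑ e ∈ C, w e < 0) :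
    IsVertexOf {y | memP E w y} (fun e => (-1 / ∑ e ∈ C, w e) * chi C e) := by
  obtain ⟨n, f, hf, hCeq⟩ := hC
  set s : ℝ := ∑ e ∈ C, w e with hsdef
  have hs : s ≠ 0 := ne_of_lt hneg
  have hc : 0 < -1 / s := div_pos_of_neg_of_neg (by norm_num) hneg
  set ι : ZMod (n+1) → V × V := fun i => (f i, f (i + 1)) with hι
  have hinj : Function.Injective ι := fun a b h => hf (congrArg Prod.fst h)
  set y : V × V → ℝ := fun e => (-1 / s) * chi C e with hydef
  have hy0 : ∀ e ∉ C, y e = 0 := by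
    intro e he; simp [hydef, chi, he]
  have hy1 : ∀ e ∈ C, y e = -1 / s := by
    intro e he; simp [hydef, chi, he]
  constructor
  · -- membership
    refine ⟨?_, ?_, ?_, ?_⟩
    · intro e
      apply mul_nonneg hc.le
      unfold chi; split <;> norm_num
    · intro e he
      exact hy0 e (fun h => he (hCE h))
    · intro u
      rw [sum_filter_support E C hCE _ y hy0, sum_filter_support E C hCE _ y hy0,
        hCeq, Finset.filter_image, Finset.filter_image,
        Finset.sum_image (fun a _ b _ h => hinj h),
        Finset.sum_image (fun a _ b _ h => hinj h)]
      rw [Finset.sum_congr rfl (fun i _ => hy1 (ι i) (hCeq ▸ Finset.mem_image_of_mem _ (Finset.mem_univ i))),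
        Finset.sum_congr rfl (fun i _ => hy1 (ι i) (hCeq ▸ Finset.mem_image_of_mem _ (Finset.mem_univ i))),
        Finset.sum_const, Finset.sum_const]
      congr 1
      apply Finset.card_bij (fun (j : ZMod (n+1)) _ => j - 1)
      · intro a ha
        simp only [Finset.mem_filter, Finset.mem_univ, true_and] at ha ⊢
        simpa [hι, sub_add_cancel] using ha
      · intro a _ b _ h
        exact sub_left_injective h
      · intro b hb
        simp only [Finset.mem_filter, Finset.mem_univ, true_and] at hb ⊢
        exact ⟨b + 1, by simpa [hι] using hb, by ring⟩
    · have : ∑ e ∈ E, w e * y e = ∑ e ∈ C, w e * y e := by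
        symm; apply Finset.sum_subset hCE
        intro e _ he; rw [hy0 e he, mul_zero]
      rw [this, Finset.sum_congr rfl (fun e he => by rw [hy1 e he])]
      rw [← Finset.sum_mul]
      field_simp
      rfl
  · rintro ⟨y₁, hy₁, y₂, hy₂, hne, t, ht0, ht1, hy⟩
    have hpt : ∀ e, y e = t * y₁ e + (1 - t) * y₂ e := by
      intro e
      have := congrFun hy e
      simpa [hydef] using this
    have hsupp : ∀ e ∉ C, y₁ e = 0 ∧ y₂ e = 0 := by
      intro e he
      have h0 := hpt e
      rw [hy0 e he] at h0
      have h1 := hy₁.1 e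
      have h2 := hy₂.1 e
      constructor <;> nlinarith
    have e1 : y₁ = y := by
      rw [hydef]
      exact uniq E w n f hf C hCeq hCE y₁ (fun e he => (hsupp e he).1) hy₁.2.2.1 hy₁.2.2.2 hs
    have e2 : y₂ = y := by
      rw [hydef]
      exact uniq E w n f hf C hCeq hCE y₂ (fun e he => (hsupp e he).2) hy₂.2.2.1 hy₂.2.2.2 hs
    exact hne (e1.trans e2.symm)
end

section
/- If y is a vertex of P(G,w), then the support Y = { e : y_e > 0 } contains no directed cycle C with w(C) = 0. -/
open Finset

lemma cycle_card {V : Type} [DecidableEq V] {C : Finset (V × V)} (h : IsCycle C) (u : V) :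
    (C.filter (fun e => e.1 = u)).card = (C.filter (fun e => e.2 = u)).card := by
  obtain ⟨n, f, hf, rfl⟩ := h
  have hg : Function.Injective (fun i : ZMod (n+1) => (f i, f (i + 1))) := by
    intro i j hij
    exact hf (congrArg Prod.fst hij)
  rw [Finset.filter_image, Finset.filter_image,
    Finset.card_image_of_injective _ hg, Finset.card_image_of_injective _ hg]
  refine Finset.card_bij' (fun i _ => i - 1) (fun j _ => j + 1) ?_ ?_ ?_ ?_
  all_goals intro a ha
  all_goals simp only [Finset.mem_filter, Finset.mem_univ, true_and] at ha ⊢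
  · rw [sub_add_cancel]; exact ha
  · exact ha
  · ring
  · ring

lemma chi_sum {V : Type} [DecidableEq V] (C : Finset (V × V)) (s : Finset (V × V))
    (hCs : C ⊆ s) (p : V × V → Prop) [DecidablePred p] :
    ∑ e ∈ s.filter p, chi C e = (C.filter p).card := by
  unfold chi
  rw [Finset.sum_ite_mem]
  have : s.filter p ∩ C = C.filter p := by
    ext e
    simp only [Finset.mem_inter, Finset.mem_filter]
    constructor
    · rintro ⟨⟨_, hp⟩, hc⟩; exact ⟨hc, hp⟩
    · rintro ⟨hc, hp⟩; exact ⟨⟨hCs hc, hp⟩, hc⟩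
  rw [this, Finset.sum_const, nsmul_eq_mul, mul_one]

/-- the support of a vertex of `P(G,w)` contains no zero-weight cycle. -/
theorem stmt_3 {V : Type} [Fintype V] [DecidableEq V]
    (E : Finset (V × V)) (w : V × V → ℝ) (y : V × V → ℝ)
    (hv : IsVertexOf {z | memP E w z} y) :
    ¬ ∃ C : Finset (V × V), IsCycle C ∧ C ⊆ E ∧ (∑ e ∈ C, w e) = 0 ∧
        ∀ e ∈ C, 0 < y e := by
  rintro ⟨C, hcyc, hCE, hw0, hpos⟩
  obtain ⟨⟨hy0, hyE, hcons, hwt⟩, hnv⟩ := hv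
  have hCne : C.Nonempty := by
    obtain ⟨n, f, hf, rfl⟩ := hcyc
    exact ⟨_, Finset.mem_image.2 ⟨0, Finset.mem_univ _, rfl⟩⟩
  set ε := C.inf' hCne y with hε
  have hεpos : 0 < ε := (Finset.lt_inf'_iff hCne).2 hpos
  have hεle : ∀ e ∈ C, ε ≤ y e := fun e he => Finset.inf'_le _ he
  have hchi0 : ∀ e, 0 ≤ chi C e := by
    intro e; unfold chi; split <;> norm_num
  have hchiE : ∀ e, e ∉ E → chi C e = 0 := by
    intro e he; unfold chi
    rw [if_neg (fun hc => he (hCE hc))]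
  have hchicons : ∀ u : V, ∑ e ∈ E.filter (fun e => e.1 = u), chi C e
      = ∑ e ∈ E.filter (fun e => e.2 = u), chi C e := by
    intro u
    rw [chi_sum C E hCE, chi_sum C E hCE, cycle_card hcyc]
  have hchiw : ∑ e ∈ E, w e * chi C e = 0 := by
    have h1 : ∑ e ∈ E, w e * chi C e = ∑ e ∈ C, w e * chi C e :=
      (Finset.sum_subset hCE (fun e _ he => by
        unfold chi; rw [if_neg he, mul_zero])).symm
    have h2 : ∑ e ∈ C, w e * chi C e = ∑ e ∈ C, w e :=
      Finset.sum_congr rfl fun e he => by unfold chi; rw [if_pos he, mul_one]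
    rw [h1, h2, hw0]
  apply hnv
  refine ⟨(fun e => y e + ε * chi C e), ?_, (fun e => y e - ε * chi C e), ?_, ?_, 1/2, by norm_num, by norm_num, ?_⟩
  · refine ⟨fun e => add_nonneg (hy0 e) (mul_nonneg hεpos.le (hchi0 e)), fun e he => by show y e + ε * chi C e = 0; rw [hyE e he, hchiE e he, mul_zero, add_zero], fun u => ?_, ?_⟩
    · beta_reduce
      rw [Finset.sum_add_distrib, Finset.sum_add_distrib, hcons u, ← Finset.mul_sum,
        ← Finset.mul_sum, hchicons u]
    · beta_reduce
      have : ∑ e ∈ E, w e * (y e + ε * chi C e)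
          = ∑ e ∈ E, w e * y e + ε * ∑ e ∈ E, w e * chi C e := by
        rw [Finset.mul_sum]
        rw [← Finset.sum_add_distrib]
        apply Finset.sum_congr rfl; intro e _; ring
      rw [this, hwt, hchiw, mul_zero, add_zero]
  · refine ⟨fun e => ?_, fun e he => by show y e - ε * chi C e = 0; rw [hyE e he, hchiE e he, mul_zero, sub_zero], fun u => ?_, ?_⟩
    · show 0 ≤ y e - ε * chi C e
      by_cases he : e ∈ C
      · have : chi C e = 1 := by unfold chi; rw [if_pos he]
        rw [this, mul_one, sub_nonneg]; exact hεle e he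
      · have : chi C e = 0 := by unfold chi; rw [if_neg he]
        rw [this, mul_zero, sub_zero]; exact hy0 e
    · beta_reduce
      rw [Finset.sum_sub_distrib, Finset.sum_sub_distrib, hcons u, ← Finset.mul_sum,
        ← Finset.mul_sum, hchicons u]
    · beta_reduce
      have : ∑ e ∈ E, w e * (y e - ε * chi C e)
          = ∑ e ∈ E, w e * y e - ε * ∑ e ∈ E, w e * chi C e := by
        rw [Finset.mul_sum, ← Finset.sum_sub_distrib]
        apply Finset.sum_congr rfl; intro e _; ring
      rw [this, hwt, hchiw, mul_zero, sub_zero]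
  · obtain ⟨e₀, he₀⟩ := hCne
    intro hcontra
    have h1 : chi C e₀ = 1 := by unfold chi; rw [if_pos he₀]
    have := congrFun hcontra e₀
    simp only [h1, mul_one] at this
    linarith
  · funext e
    simp only [Pi.add_apply, Pi.smul_apply, smul_eq_mul]
    ring
end

section
/- If y is a vertex of P(G,w), then there do not exist two distinct simple directed cycles C₁, C₂, each of nonzero total weight, with C₁ ∪ C₂ contained in the support { e : y_e > 0 } of y. -/
open Finset

lemma cycle_nonempty {V : Type} [DecidableEq V] {C : Finset (V × V)}
    (hC : IsCycle C) : C.Nonempty := by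
  obtain ⟨n, f, hf, rfl⟩ := hC
  exact (Finset.univ_nonempty).image _

lemma chi_sum_filter {V : Type} [Fintype V] [DecidableEq V] {E C : Finset (V × V)}
    (hCE : C ⊆ E) (p : V × V → Prop) [DecidablePred p] :
    ∑ e ∈ E.filter p, chi C e = ((C.filter p).card : ℝ) := by
  unfold chi
  rw [Finset.sum_boole]
  congr 2
  ext e
  simp only [Finset.mem_filter]
  exact ⟨fun ⟨⟨_, hp⟩, hc⟩ => ⟨hc, hp⟩, fun ⟨hc, hp⟩ => ⟨⟨hCE hc, hp⟩, hc⟩⟩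

lemma cycle_conserve {V : Type} [Fintype V] [DecidableEq V] {E C : Finset (V × V)}
    (hC : IsCycle C) (hCE : C ⊆ E) (u : V) :
    ∑ e ∈ E.filter (fun e => e.1 = u), chi C e
      = ∑ e ∈ E.filter (fun e => e.2 = u), chi C e := by
  obtain ⟨n, f, hf, rfl⟩ := hC
  set C := Finset.image (fun i : ZMod (n+1) => (f i, f (i + 1))) Finset.univ
  rw [chi_sum_filter hCE, chi_sum_filter hCE]
  have hg : Function.Injective (fun i : ZMod (n+1) => (f i, f (i + 1))) :=
    fun i j h => hf (congrArg Prod.fst h)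
  have h1 : ∀ (p : V × V → Prop) [DecidablePred p],
      (C.filter p).card = (Finset.univ.filter (fun i : ZMod (n+1) => p (f i, f (i+1)))).card := by
    intro p _
    rw [Finset.filter_image, Finset.card_image_of_injective _ hg]
  rw [h1, h1]
  norm_cast
  exact Finset.card_equiv (Equiv.subRight (1 : ZMod (n+1))) (by intro i; simp)

lemma chi_weight {V : Type} [Fintype V] [DecidableEq V] {E C : Finset (V × V)}
    (hCE : C ⊆ E) (w : V × V → ℝ) :
    ∑ e ∈ E, w e * chi C e = ∑ e ∈ C, w e := by
  unfold chi
  simp only [mul_ite, mul_one, mul_zero]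
  rw [← Finset.sum_filter, Finset.filter_mem_eq_inter, Finset.inter_eq_right.mpr hCE]
/-- the support of a vertex of `P(G,w)` does not contain two distinct
cycles, each of nonzero total weight. -/
theorem stmt_4 {V : Type} [Fintype V] [DecidableEq V]
    (E : Finset (V × V)) (w : V × V → ℝ) (y : V × V → ℝ)
    (hv : IsVertexOf {z | memP E w z} y) :
    ¬ ∃ C₁ C₂ : Finset (V × V), IsCycle C₁ ∧ IsCycle C₂ ∧ C₁ ≠ C₂ ∧
        C₁ ⊆ E ∧ C₂ ⊆ E ∧ (∑ e ∈ C₁, w e) ≠ 0 ∧ (∑ e ∈ C₂, w e) ≠ 0 ∧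
        ∀ e ∈ C₁ ∪ C₂, 0 < y e := by
  rintro ⟨C₁, C₂, hc1, hc2, hne, hE1, hE2, hw1, hw2, hpos⟩
  obtain ⟨⟨hy0, hyE, hycons, hyw⟩, hext⟩ := hv
  obtain ⟨a, ha⟩ : ∃ a : ℝ, a = ∑ e ∈ C₂, w e := ⟨_, rfl⟩
  obtain ⟨b, hb⟩ : ∃ b : ℝ, b = ∑ e ∈ C₁, w e := ⟨_, rfl⟩
  rw [← ha] at hw2
  rw [← hb] at hw1
  obtain ⟨d, hd⟩ : ∃ d : V × V → ℝ, d = fun e => a * chi C₁ e - b * chi C₂ e := ⟨_, rfl⟩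
  have hdapp : ∀ e, d e = a * chi C₁ e - b * chi C₂ e := fun e => by rw [hd]
  have hdzero : ∀ e ∉ C₁ ∪ C₂, d e = 0 := by
    intro e he
    simp only [Finset.mem_union, not_or] at he
    simp [hdapp, chi, he.1, he.2]
  have hdbound : ∀ e, |d e| ≤ |a| + |b| := by
    intro e
    have h1 : |chi C₁ e| ≤ 1 := by unfold chi; split <;> simp
    have h2 : |chi C₂ e| ≤ 1 := by unfold chi; split <;> simp
    rw [hdapp]
    calc |a * chi C₁ e - b * chi C₂ e| ≤ |a * chi C₁ e| + |b * chi C₂ e| := abs_sub _ _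
      _ ≤ |a| * 1 + |b| * 1 := by
          rw [abs_mul, abs_mul]
          exact add_le_add (mul_le_mul_of_nonneg_left h1 (abs_nonneg a))
            (mul_le_mul_of_nonneg_left h2 (abs_nonneg b))
      _ = |a| + |b| := by ring
  obtain ⟨e₀, he₀⟩ := cycle_nonempty hc1
  have hUne : y e₀ ∈ (C₁ ∪ C₂).image y :=
    Finset.mem_image_of_mem y (Finset.mem_union_left _ he₀)
  obtain ⟨m, hmdef⟩ : ∃ m : ℝ, m = ((C₁ ∪ C₂).image y).min' ⟨y e₀, hUne⟩ := ⟨_, rfl⟩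
  have hm_pos : 0 < m := by
    obtain ⟨e, he, hye⟩ := Finset.mem_image.mp (Finset.min'_mem ((C₁ ∪ C₂).image y) ⟨y e₀, hUne⟩)
    rw [hmdef, ← hye]
    exact hpos e he
  have hm_le : ∀ e ∈ C₁ ∪ C₂, m ≤ y e := fun e he =>
    hmdef ▸ Finset.min'_le _ _ (Finset.mem_image_of_mem y he)
  obtain ⟨M, hMdef⟩ : ∃ M : ℝ, M = |a| + |b| + 1 := ⟨_, rfl⟩
  have hM : 0 < M := by rw [hMdef]; positivity
  obtain ⟨ε, hεdef⟩ : ∃ ε : ℝ, ε = m / M := ⟨_, rfl⟩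
  have hε : 0 < ε := hεdef ▸ div_pos hm_pos hM
  have hεM : ε * M = m := by rw [hεdef]; exact div_mul_cancel₀ _ hM.ne'
  have key : ∀ δ : ℝ, |δ| ≤ ε → memP E w (y + δ • d) := by
    intro δ hδ
    refine ⟨?_, ?_, ?_, ?_⟩
    · intro e
      simp only [Pi.add_apply, Pi.smul_apply, smul_eq_mul]
      by_cases he : e ∈ C₁ ∪ C₂
      · have h1 : |δ * d e| ≤ ε * (|a| + |b|) := by
          rw [abs_mul]
          exact mul_le_mul hδ (hdbound e) (abs_nonneg _) hε.le
        have h2 : ε * (|a| + |b|) ≤ m := by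
          calc ε * (|a| + |b|) ≤ ε * M := by
                apply mul_le_mul_of_nonneg_left _ hε.le
                rw [hMdef]; linarith
            _ = m := hεM
        have h3 := neg_abs_le (δ * d e)
        have h4 := hm_le e he
        linarith
      · rw [hdzero e he]
        simpa using hy0 e
    · intro e heE
      have hnu : e ∉ C₁ ∪ C₂ := fun hin => heE (by
        rcases Finset.mem_union.mp hin with h | h
        exacts [hE1 h, hE2 h])
      simp only [Pi.add_apply, Pi.smul_apply, smul_eq_mul]
      rw [hyE e heE, hdzero e hnu]
      ring
    · intro u
      have e1 := cycle_conserve hc1 hE1 u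
      have e2 := cycle_conserve hc2 hE2 u
      have expand : ∀ (s : Finset (V × V)),
          ∑ e ∈ s, (y + δ • d) e
            = ∑ e ∈ s, y e + δ * a * ∑ e ∈ s, chi C₁ e - δ * b * ∑ e ∈ s, chi C₂ e := by
        intro s
        have step : ∑ e ∈ s, (y + δ • d) e
            = ∑ e ∈ s, (y e + δ * a * chi C₁ e - δ * b * chi C₂ e) :=
          Finset.sum_congr rfl (fun e _ => by
            simp only [Pi.add_apply, Pi.smul_apply, smul_eq_mul, hdapp]; ring)
        rw [step, Finset.sum_sub_distrib, Finset.sum_add_distrib,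
          ← Finset.mul_sum, ← Finset.mul_sum]
      rw [expand, expand, hycons u, e1, e2]
    · have expand : ∀ e, w e * (y + δ • d) e
          = w e * y e + (δ * a) * (w e * chi C₁ e) - (δ * b) * (w e * chi C₂ e) := by
        intro e
        simp only [Pi.add_apply, Pi.smul_apply, smul_eq_mul, hdapp]
        ring
      rw [Finset.sum_congr rfl (fun e _ => expand e), Finset.sum_sub_distrib,
        Finset.sum_add_distrib, ← Finset.mul_sum, ← Finset.mul_sum,
        chi_weight hE1 w, chi_weight hE2 w, hyw, ← ha, ← hb]
      ring
  obtain ⟨e, he⟩ : ∃ e, (e ∈ C₁ ∧ e ∉ C₂) ∨ (e ∈ C₂ ∧ e ∉ C₁) := by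
    by_contra h
    push_neg at h
    apply hne
    ext e
    have := h e
    tauto
  have hde : d e ≠ 0 := by
    rcases he with ⟨h1, h2⟩ | ⟨h1, h2⟩
    · simpa [hdapp, chi, h1, h2] using hw2
    · simpa [hdapp, chi, h1, h2] using hw1
  apply hext
  refine ⟨y + ε • d, key ε (le_of_eq (abs_of_pos hε)),
    y + (-ε) • d, key (-ε) (le_of_eq (by rw [abs_neg, abs_of_pos hε])), ?_,
    1/2, by norm_num, by norm_num, ?_⟩
  · intro hcontra
    have h' := congrFun hcontra e
    simp only [Pi.add_apply, Pi.smul_apply, smul_eq_mul] at h'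
    have h2 : ε * d e - (-ε) * d e = 0 := by linarith
    have h3 : (2 * ε) * d e = 0 := by linear_combination h2
    rcases mul_eq_zero.mp h3 with h | h
    · linarith
    · exact hde h
  · funext e'
    simp only [Pi.add_apply, Pi.smul_apply, smul_eq_mul]
    ring
end

section
/- A 2-cycle of (G,w) is a pair (C₁,C₂) of simple directed cycles with w(C₁) < 0, w(C₂) > 0, such that C₁ ∪ C₂ contains no directed cycle other than C₁ and C₂. Then every 2-cycle is either (a) the union of two arc-disjoint cycles C₁ and C₂, or (b) the arc-disjoint union of three directed paths P₁, P₂, P₃ such that C₁ = P₁ ∪ P₂ and C₂ = P₁ ∪ P₃. -/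
open Finset

/-- A simple directed path with at least one arc, identified with its arc set. -/
def IsPath {V : Type} [DecidableEq V] (P : Finset (V × V)) : Prop :=
  ∃ (n : ℕ) (f : Fin (n + 2) → V), Function.Injective f ∧
    P = Finset.image (fun i : Fin (n + 1) => (f i.castSucc, f i.succ)) Finset.univ

/-- A 2-cycle: a negative cycle and a positive cycle whose union contains no
other cycle. -/
def IsTwoCycle {V : Type} [Fintype V] [DecidableEq V] (E : Finset (V × V))
    (w : V × V → ℝ) (C₁ C₂ : Finset (V × V)) : Prop :=
  IsCycle C₁ ∧ IsCycle C₂ ∧ C₁ ⊆ E ∧ C₂ ⊆ E ∧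
  (∑ e ∈ C₁, w e) < 0 ∧ 0 < (∑ e ∈ C₂, w e) ∧
  ∀ C : Finset (V × V), IsCycle C → C ⊆ C₁ ∪ C₂ → C = C₁ ∨ C = C₂

namespace Stmt8

lemma natCast_zmod_inj {N : ℕ} {a b : ℕ} (ha : a < N) (hb : b < N)
    (h : (a : ZMod N) = (b : ZMod N)) : a = b := by
  rw [← ZMod.val_cast_of_lt ha, ← ZMod.val_cast_of_lt hb, h]

lemma cycle_eq_of_subset {V : Type} [DecidableEq V] {C₁ C₂ : Finset (V × V)}
    (h₁ : IsCycle C₁) (h₂ : IsCycle C₂) (hsub : C₁ ⊆ C₂) : C₁ = C₂ := by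
  obtain ⟨n, f, hf, rfl⟩ := h₁
  obtain ⟨m, g, hg, rfl⟩ := h₂
  have hmem : ∀ i : ZMod (n+1), ∃ b : ZMod (m+1), g b = f i ∧ g (b+1) = f (i+1) := by
    intro i
    have h := hsub (mem_image_of_mem _ (mem_univ i))
    rw [mem_image] at h
    obtain ⟨b, -, hb⟩ := h
    rw [Prod.ext_iff] at hb
    exact ⟨b, hb.1, hb.2⟩
  choose φ hφ1 hφ2 using hmem
  have hstep : ∀ i, φ (i+1) = φ i + 1 := fun i => hg (by rw [hφ1, hφ2])
  have hiter : ∀ (k : ℕ) (i : ZMod (n+1)), φ (i + (k:ℕ)) = φ i + (k:ℕ) := by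
    intro k
    induction k with
    | zero => simp
    | succ k ih =>
      intro i
      have : i + ((k:ℕ)+1 : ℕ) = (i + (k:ℕ)) + 1 := by push_cast; ring
      rw [this, hstep, ih]
      push_cast; ring
  have hdvd : (m+1) ∣ (n+1) := by
    have h := hiter (n+1) 0
    rw [ZMod.natCast_self, add_zero] at h
    have h0 : ((n+1 : ℕ) : ZMod (m+1)) = 0 := by
      have := h.symm
      rwa [add_eq_left] at this
    exact (ZMod.natCast_eq_zero_iff _ _).1 h0
  have hφinj : Function.Injective φ := by
    intro a b hab
    apply hf
    have h1 : f a = g (φ a) := (hφ1 a).symm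
    rw [h1, hab, hφ1]
  have hcard : n + 1 ≤ m + 1 := by
    simpa [ZMod.card] using Fintype.card_le_of_injective φ hφinj
  have hmn : m = n := by
    have := Nat.le_of_dvd (Nat.succ_pos n) hdvd
    omega
  subst hmn
  have hφsurj : Function.Surjective φ := Finite.surjective_of_injective hφinj
  apply Finset.Subset.antisymm hsub
  intro e he
  rw [mem_image] at he ⊢
  obtain ⟨b, -, rfl⟩ := he
  obtain ⟨a, rfl⟩ := hφsurj b
  exact ⟨a, mem_univ _, by rw [hφ1, hφ2]⟩

lemma interval_of_unique_runEnd {n : ℕ} {S : Finset (ZMod (n+1))} {i₀ : ZMod (n+1)}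
    (hi₀ : i₀ ∈ S) (hSne : ∃ z, z ∉ S)
    (hstep : ∀ j ∈ S, j ≠ i₀ → j + 1 ∈ S) :
    ∃ (r : ℕ) (a : ZMod (n+1)), 1 ≤ r ∧ r ≤ n ∧
      (∀ x, x ∈ S ↔ ∃ t < r, x = a + (t : ℕ)) ∧
      (∀ x, x ∉ S ↔ ∃ t < n + 1 - r, x = a + ((r + t : ℕ) : ZMod (n+1))) := by
  obtain ⟨z, hz⟩ := hSne
  have hzi : z ≠ i₀ := fun h => hz (h ▸ hi₀)
  have hv1 : 1 ≤ (i₀ - z).val := by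
    rcases Nat.eq_zero_or_pos (i₀ - z).val with h | h
    · exfalso
      have : i₀ - z = 0 := by
        have := (ZMod.natCast_zmod_val (i₀ - z)).symm
        rw [h] at this; simpa using this
      apply hzi
      exact (sub_eq_zero.mp this).symm
    · exact h
  have hv2 : (i₀ - z).val ≤ n := by
    have := ZMod.val_lt (i₀ - z); omega
  have hwit : i₀ - (((i₀ - z).val - 1 + 1 : ℕ) : ZMod (n+1)) ∉ S := by
    rw [Nat.sub_add_cancel hv1, ZMod.natCast_zmod_val]
    simpa using hz
  have hex : ∃ t, i₀ - ((t+1 : ℕ) : ZMod (n+1)) ∉ S := ⟨(i₀ - z).val - 1, hwit⟩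
  set r := Nat.find hex + 1 with hr
  have hmem_desc : ∀ t < r, i₀ - (t : ℕ) ∈ S := by
    intro t ht
    match t with
    | 0 => simpa using hi₀
    | Nat.succ t =>
      have h := Nat.find_min hex (m := t) (by omega)
      simpa using not_not.1 h
  have hout : i₀ - (r : ℕ) ∉ S := Nat.find_spec hex
  have hrn : r ≤ n := by
    have : Nat.find hex ≤ (i₀ - z).val - 1 := Nat.find_min' hex hwit
    omega
  have hr1 : 1 ≤ r := by omega
  have hsub : ∀ j ∈ S, ∃ t < r, j = i₀ - (t:ℕ) := by
    have claim : ∀ k : ℕ, ∀ j ∈ S, j + (k:ℕ) = i₀ → ∃ t < r, j = i₀ - (t:ℕ) := by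
      intro k
      induction k with
      | zero =>
        intro j hj hji
        exact ⟨0, by omega, by simpa using hji⟩
      | succ k ih =>
        intro j hj hji
        by_cases hjio : j = i₀
        · exact ⟨0, by omega, by simp [hjio]⟩
        · have hj1 : j + 1 ∈ S := hstep j hj hjio
          have hji' : (j+1) + (k:ℕ) = i₀ := by
            rw [← hji]; push_cast; ring
          obtain ⟨t, htr, htj⟩ := ih (j+1) hj1 hji'
          have hjeq : j = i₀ - ((t+1 : ℕ) : ZMod (n+1)) := by
            push_cast
            have : j + 1 = i₀ - (t:ℕ) := htj ▸ htj ▸ htj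
            linear_combination this
          have ht1 : t + 1 < r := by
            rcases Nat.lt_or_ge (t+1) r with h | h
            · exact h
            · exfalso
              have : t + 1 = r := by omega
              rw [this] at hjeq
              exact hout (hjeq ▸ hj)
          exact ⟨t+1, ht1, hjeq⟩
    intro j hj
    apply claim (i₀ - j).val j hj
    rw [ZMod.natCast_zmod_val]; ring
  set a := i₀ - ((r-1 : ℕ) : ZMod (n+1)) with ha
  have hdesc_asc : ∀ t : ℕ, t < r → i₀ - (t : ℕ) = a + ((r - 1 - t : ℕ) : ZMod (n+1)) := by
    intro t ht
    rw [ha]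
    have h2 : ((r - 1 : ℕ) : ZMod (n+1)) = ((r - 1 - t : ℕ) : ZMod (n+1)) + ((t : ℕ) : ZMod (n+1)) := by
      rw [← Nat.cast_add]
      congr 1
      omega
    rw [h2]; ring
  have hmemS : ∀ x, x ∈ S ↔ ∃ t < r, x = a + ((t : ℕ) : ZMod (n+1)) := by
    intro x
    constructor
    · intro hx
      obtain ⟨t, ht, rfl⟩ := hsub x hx
      exact ⟨r - 1 - t, by omega, hdesc_asc t ht⟩
    · rintro ⟨t, ht, rfl⟩
      have h2 : r - 1 - (r - 1 - t) = t := by omega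
      have := hdesc_asc (r - 1 - t) (by omega)
      rw [h2] at this
      rw [← this]
      exact hmem_desc _ (by omega)
  have huniq : ∀ k₁ k₂ : ℕ, k₁ ≤ n → k₂ ≤ n → a + (k₁ : ℕ) = a + (k₂ : ℕ) → k₁ = k₂ := by
    intro k₁ k₂ h1 h2 h
    have hc := add_left_cancel h
    exact natCast_zmod_inj (Nat.lt_succ_of_le h1) (Nat.lt_succ_of_le h2) hc
  have hkey : ∀ x : ZMod (n+1), x = a + ((x - a).val : ℕ) := by
    intro x; rw [ZMod.natCast_zmod_val]; ring
  have hSval : ∀ x : ZMod (n+1), x ∈ S ↔ (x - a).val < r := by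
    intro x
    rw [hmemS]
    constructor
    · rintro ⟨t, ht, rfl⟩
      have : (a + (t:ℕ) - a) = ((t:ℕ) : ZMod (n+1)) := by ring
      rw [this, ZMod.val_cast_of_lt (by omega)]
      exact ht
    · intro h
      exact ⟨(x - a).val, h, hkey x⟩
  refine ⟨r, a, hr1, hrn, hmemS, ?_⟩
  intro x
  constructor
  · intro hx
    have hk := hkey x
    have hnk : ¬ (x - a).val < r := fun h => hx ((hSval x).2 h)
    refine ⟨(x - a).val - r, by have := ZMod.val_lt (x - a); omega, ?_⟩
    have h4 : r + ((x - a).val - r) = (x - a).val := by omega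
    rw [h4]
    exact hk
  · rintro ⟨t, ht, rfl⟩
    rw [hSval]
    have h3 : a + ((r + t : ℕ) : ZMod (n+1)) - a = ((r + t : ℕ) : ZMod (n+1)) := by ring
    rw [h3, ZMod.val_cast_of_lt (by omega)]
    omega

lemma isPath_interval {V : Type} [DecidableEq V] {n : ℕ} {f : ZMod (n+1) → V}
    (hf : Function.Injective f) (a : ZMod (n+1)) {r : ℕ} (hr1 : 1 ≤ r) (hrn : r ≤ n)
    {P : Finset (V × V)}
    (hP : ∀ e, e ∈ P ↔ ∃ t < r, e = (f (a + (t:ℕ)), f (a + (t:ℕ) + 1))) :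
    IsPath P := by
  obtain ⟨n', rfl⟩ : ∃ n', r = n' + 1 := ⟨r - 1, by omega⟩
  refine ⟨n', fun k => f (a + ((k : ℕ) : ZMod (n+1))), ?_, ?_⟩
  · intro k₁ k₂ hk
    have h1 := add_left_cancel (hf hk)
    have h2 := natCast_zmod_inj (N := n+1) (by omega) (by omega) h1
    exact Fin.ext h2
  · ext e
    rw [hP e]
    simp only [mem_image, mem_univ, true_and]
    constructor
    · rintro ⟨t, ht, rfl⟩
      refine ⟨⟨t, ht⟩, ?_⟩
      simp only [Fin.coe_castSucc, Fin.val_succ]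
      push_cast
      ring_nf
    · rintro ⟨i, hi⟩
      refine ⟨i.val, i.isLt, ?_⟩
      rw [← hi]
      simp only [Fin.coe_castSucc, Fin.val_succ]
      push_cast
      ring_nf

lemma runEnd_unique {V : Type} [Fintype V] [DecidableEq V]
    {n m : ℕ} (hn : n ≠ 0)
    {f : ZMod (n+1) → V} {g : ZMod (m+1) → V}
    (hf : Function.Injective f) (hg : Function.Injective g)
    {C₁ C₂ : Finset (V × V)}
    (hC₁ : C₁ = Finset.image (fun i => (f i, f (i+1))) Finset.univ)
    (hC₂ : C₂ = Finset.image (fun i => (g i, g (i+1))) Finset.univ)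
    (hcyc : ∀ C : Finset (V × V), IsCycle C → C ⊆ C₁ ∪ C₂ → C = C₁ ∨ C = C₂)
    {i i' : ZMod (n+1)}
    (hiS : (f i, f (i+1)) ∈ C₂) (hi1 : (f (i+1), f (i+1+1)) ∉ C₂)
    (hi'S : (f i', f (i'+1)) ∈ C₂) (hi'1 : (f (i'+1), f (i'+1+1)) ∉ C₂) :
    i = i' := by
  by_contra hii'
  classical
  set U : Finset V := Finset.univ.image f ∩ Finset.univ.image g with hU
  have hUf : ∀ {a : ZMod (n+1)} {b : ZMod (m+1)}, f a = g b → f a ∈ U := by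
    intro a b hab
    rw [hU, mem_inter]
    refine ⟨mem_image_of_mem f (mem_univ a), ?_⟩
    rw [hab]; exact mem_image_of_mem g (mem_univ b)
  have hUg : ∀ v ∈ U, ∃ b : ZMod (m+1), g b = v := by
    intro v hv
    obtain ⟨-, h2⟩ := mem_inter.1 hv
    rw [mem_image] at h2
    obtain ⟨b, -, hb⟩ := h2
    exact ⟨b, hb⟩
  have harcU : ∀ a : ZMod (n+1), (f a, f (a+1)) ∈ C₂ → f a ∈ U ∧ f (a+1) ∈ U := by
    intro a ha
    rw [hC₂, mem_image] at ha
    obtain ⟨b, -, hb⟩ := ha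
    rw [Prod.ext_iff] at hb
    exact ⟨hUf hb.1.symm, hUf hb.2.symm⟩
  set j := i + 1 with hj
  have hfiU : f i ∈ U := (harcU i hiS).1
  have hfjU : f j ∈ U := (harcU i hiS).2
  have hwitP : f (j + ((n - 1 + 1 : ℕ) : ZMod (n+1))) ∈ U := by
    have hcast : ((n - 1 + 1 : ℕ) : ZMod (n+1)) = ((n : ℕ) : ZMod (n+1)) := by
      congr 1; omega
    rw [hcast]
    have hn1 : ((n:ℕ) : ZMod (n+1)) = -1 := by
      have h := ZMod.natCast_self (n+1)
      push_cast at h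
      linear_combination h
    have hji : j + ((n:ℕ) : ZMod (n+1)) = i := by rw [hj, hn1]; ring
    rw [hji]; exact hfiU
  have hex : ∃ t : ℕ, f (j + ((t+1 : ℕ) : ZMod (n+1))) ∈ U := ⟨n - 1, hwitP⟩
  set d := Nat.find hex + 1 with hd
  have hd1 : 1 ≤ d := by omega
  have hdU : f (j + ((d:ℕ) : ZMod (n+1))) ∈ U := by rw [hd]; exact Nat.find_spec hex
  have hdmin : ∀ t : ℕ, 1 ≤ t → t < d → f (j + ((t:ℕ) : ZMod (n+1))) ∉ U := by
    intro t ht1 htd hmem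
    have h := Nat.find_min hex (m := t - 1) (by omega)
    apply h
    have ht : t - 1 + 1 = t := by omega
    rw [ht]; exact hmem
  have hdn : d ≤ n := by
    have hle : Nat.find hex ≤ n - 1 := Nat.find_min' hex hwitP
    omega
  obtain ⟨p, hp⟩ : ∃ p : ZMod (m+1), g p = f (j + ((d:ℕ) : ZMod (n+1))) := hUg _ hdU
  obtain ⟨q, hq⟩ : ∃ q : ZMod (m+1), g q = f j := hUg _ hfjU
  have hdne : ((d:ℕ) : ZMod (n+1)) ≠ 0 := by
    intro h0
    have hdvd := (ZMod.natCast_eq_zero_iff d (n+1)).1 h0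
    have := Nat.le_of_dvd (by omega) hdvd
    omega
  have hjd : f j ≠ f (j + ((d:ℕ) : ZMod (n+1))) := by
    intro hh
    have h1 := hf hh
    apply hdne
    linear_combination -h1
  set ℓ := (q - p).val with hℓ
  have hqp : q = p + ((ℓ : ℕ) : ZMod (m+1)) := by rw [hℓ, ZMod.natCast_zmod_val]; ring
  have hℓ1 : 1 ≤ ℓ := by
    rcases Nat.eq_zero_or_pos ℓ with h | h
    · exfalso
      have hqp' : q = p := by rw [hqp, h]; simp
      apply hjd
      rw [← hq, hqp', hp]
    · exact h
  have hℓm : ℓ ≤ m := by have := ZMod.val_lt (q - p); omega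
  set N := d + ℓ - 1 with hN
  have hN1 : N + 1 = d + ℓ := by omega
  haveI : NeZero (N+1) := ⟨by omega⟩
  set F : ZMod (N+1) → V := fun z =>
    if z.val < d then f (j + ((z.val : ℕ) : ZMod (n+1)))
    else g (p + ((z.val - d : ℕ) : ZMod (m+1))) with hF
  have hvlt : ∀ z : ZMod (N+1), z.val < d + ℓ := by
    intro z; have := ZMod.val_lt z; omega
  have hffinj : ∀ t₁ t₂ : ℕ, t₁ ≤ n → t₂ ≤ n →
      f (j + ((t₁:ℕ) : ZMod (n+1))) = f (j + ((t₂:ℕ) : ZMod (n+1))) → t₁ = t₂ := by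
    intro t₁ t₂ h1 h2 hff
    have := add_left_cancel (hf hff)
    exact natCast_zmod_inj (by omega) (by omega) this
  have hgginj : ∀ s₁ s₂ : ℕ, s₁ ≤ m → s₂ ≤ m →
      g (p + ((s₁:ℕ) : ZMod (m+1))) = g (p + ((s₂:ℕ) : ZMod (m+1))) → s₁ = s₂ := by
    intro s₁ s₂ h1 h2 hgg
    have := add_left_cancel (hg hgg)
    exact natCast_zmod_inj (by omega) (by omega) this
  have hfg : ∀ t s : ℕ, t < d → s < ℓ →
      f (j + ((t:ℕ) : ZMod (n+1))) ≠ g (p + ((s:ℕ) : ZMod (m+1))) := by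
    intro t s ht hs hfgeq
    rcases Nat.eq_zero_or_pos t with rfl | ht1
    · have h0 : f j = g (p + ((s:ℕ) : ZMod (m+1))) := by
        rw [← hfgeq]; norm_num
      have hgq : g (p + ((s:ℕ) : ZMod (m+1))) = g (p + ((ℓ:ℕ) : ZMod (m+1))) := by
        rw [← h0, ← hqp, hq]
      have := hgginj s ℓ (by omega) (by omega) hgq
      omega
    · exact hdmin t ht1 ht (hUf hfgeq)
  have hFinj : Function.Injective F := by
    intro z₁ z₂ hz
    have hv₁ := hvlt z₁
    have hv₂ := hvlt z₂
    simp only [hF] at hz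
    by_cases c₁ : z₁.val < d <;> by_cases c₂ : z₂.val < d
    · rw [if_pos c₁, if_pos c₂] at hz
      have := hffinj z₁.val z₂.val (by omega) (by omega) hz
      exact ZMod.val_injective _ this
    · rw [if_pos c₁, if_neg c₂] at hz
      exact absurd hz (hfg z₁.val (z₂.val - d) c₁ (by omega))
    · rw [if_neg c₁, if_pos c₂] at hz
      exact absurd hz.symm (hfg z₂.val (z₁.val - d) c₂ (by omega))
    · rw [if_neg c₁, if_neg c₂] at hz
      have := hgginj (z₁.val - d) (z₂.val - d) (by omega) (by omega) hz
      have hvv : z₁.val = z₂.val := by omega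
      exact ZMod.val_injective _ hvv
  have harc : ∀ v : ℕ, v < d + ℓ →
      (F ((v:ℕ) : ZMod (N+1)), F (((v:ℕ) : ZMod (N+1)) + 1)) =
        if v < d then (f (j + ((v:ℕ) : ZMod (n+1))), f (j + ((v:ℕ) : ZMod (n+1)) + 1))
        else (g (p + ((v - d : ℕ) : ZMod (m+1))), g (p + ((v - d : ℕ) : ZMod (m+1)) + 1)) := by
    intro v hv
    have hsucc : ((v:ℕ) : ZMod (N+1)) + 1 = ((v+1 : ℕ) : ZMod (N+1)) := by push_cast; ring
    by_cases hvd : v < d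
    · rw [if_pos hvd]
      have h1 : F ((v:ℕ) : ZMod (N+1)) = f (j + ((v:ℕ) : ZMod (n+1))) := by
        simp only [hF]
        rw [ZMod.val_cast_of_lt (by omega), if_pos hvd]
      by_cases hv1 : v + 1 < d
      · have h2 : F (((v:ℕ) : ZMod (N+1)) + 1) = f (j + ((v+1 : ℕ) : ZMod (n+1))) := by
          rw [hsucc]
          simp only [hF]
          rw [ZMod.val_cast_of_lt (by omega), if_pos hv1]
        rw [h1, h2]
        congr 1
        push_cast
        ring_nf
      · have hvd1 : v + 1 = d := by omega
        have h2 : F (((v:ℕ) : ZMod (N+1)) + 1) = g p := by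
          rw [hsucc]
          simp only [hF]
          rw [ZMod.val_cast_of_lt (by omega), if_neg (by omega)]
          have hz0 : v + 1 - d = 0 := by omega
          rw [hz0]
          norm_num
        rw [h1, h2, hp]
        congr 1
        rw [← hvd1]
        push_cast
        ring_nf
    · rw [if_neg hvd]
      have h1 : F ((v:ℕ) : ZMod (N+1)) = g (p + ((v - d : ℕ) : ZMod (m+1))) := by
        simp only [hF]
        rw [ZMod.val_cast_of_lt (by omega), if_neg hvd]
      by_cases hv1 : v + 1 < d + ℓ
      · have h2 : F (((v:ℕ) : ZMod (N+1)) + 1) = g (p + ((v + 1 - d : ℕ) : ZMod (m+1))) := by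
          rw [hsucc]
          simp only [hF]
          rw [ZMod.val_cast_of_lt (by omega), if_neg (by omega)]
        rw [h1, h2]
        congr 2
        have hvv : (v + 1 - d) = (v - d) + 1 := by omega
        rw [hvv]
        push_cast
        ring
      · have hveq : v + 1 = d + ℓ := by omega
        have h2 : F (((v:ℕ) : ZMod (N+1)) + 1) = f j := by
          rw [hsucc]
          have hz0 : ((v+1 : ℕ) : ZMod (N+1)) = 0 := by
            rw [hveq, ← hN1]
            exact ZMod.natCast_self _
          rw [hz0]
          simp only [hF]
          rw [ZMod.val_zero, if_pos (by omega)]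
          norm_num
        rw [h1, h2, ← hq, hqp]
        congr 2
        have hvv : ℓ = (v - d) + 1 := by omega
        rw [hvv]
        push_cast
        ring
  set D : Finset (V × V) := Finset.image (fun z : ZMod (N+1) => (F z, F (z+1))) Finset.univ with hD
  have hDcyc : IsCycle D := ⟨N, F, hFinj, hD⟩
  have hDmem : ∀ e : V × V, e ∈ D ↔
      (∃ t < d, e = (f (j + ((t:ℕ) : ZMod (n+1))), f (j + ((t:ℕ) : ZMod (n+1)) + 1))) ∨
      (∃ s < ℓ, e = (g (p + ((s:ℕ) : ZMod (m+1))), g (p + ((s:ℕ) : ZMod (m+1)) + 1))) := by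
    intro e
    rw [hD, mem_image]
    constructor
    · rintro ⟨z, -, hz'⟩
      have hz2 : (F z, F (z+1)) = e := hz'
      have hv := hvlt z
      have hzc : ((z.val : ℕ) : ZMod (N+1)) = z := ZMod.natCast_zmod_val z
      rw [← hzc] at hz2
      rw [harc z.val hv] at hz2
      by_cases hzd : z.val < d
      · rw [if_pos hzd] at hz2
        exact Or.inl ⟨z.val, hzd, hz2.symm⟩
      · rw [if_neg hzd] at hz2
        exact Or.inr ⟨z.val - d, by omega, hz2.symm⟩
    · rintro (⟨t, ht, rfl⟩ | ⟨s, hs, rfl⟩)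
      · refine ⟨((t:ℕ) : ZMod (N+1)), mem_univ _, ?_⟩
        show (F ((t:ℕ) : ZMod (N+1)), F (((t:ℕ) : ZMod (N+1)) + 1)) = _
        rw [harc t (by omega), if_pos ht]
      · refine ⟨((d + s : ℕ) : ZMod (N+1)), mem_univ _, ?_⟩
        show (F ((d+s:ℕ) : ZMod (N+1)), F (((d+s:ℕ) : ZMod (N+1)) + 1)) = _
        rw [harc (d+s) (by omega), if_neg (by omega)]
        have hds : d + s - d = s := by omega
        rw [hds]
  have hDsub : D ⊆ C₁ ∪ C₂ := by
    intro e he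
    rw [hDmem] at he
    rcases he with ⟨t, ht, rfl⟩ | ⟨s, hs, rfl⟩
    · exact mem_union_left _ (by rw [hC₁]; exact mem_image_of_mem _ (mem_univ _))
    · exact mem_union_right _ (by rw [hC₂]; exact mem_image_of_mem _ (mem_univ _))
  have hDC₂ : D ≠ C₂ := by
    intro hDC
    apply hi1
    have : (f j, f (j + 1)) ∈ D := by
      rw [hDmem]
      refine Or.inl ⟨0, by omega, ?_⟩
      norm_num
    rw [hDC] at this
    exact this
  have hDC₁ : D ≠ C₁ := by
    intro hDC
    have hmem : (f (i'+1), f (i'+1+1)) ∈ C₁ := by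
      rw [hC₁]; exact mem_image_of_mem _ (mem_univ (i'+1))
    rw [← hDC, hDmem] at hmem
    rcases hmem with ⟨t, ht, heq⟩ | ⟨s, hs, heq⟩
    · rw [Prod.ext_iff] at heq
      have h1 : i' + 1 = j + ((t:ℕ) : ZMod (n+1)) := hf heq.1
      rcases Nat.eq_zero_or_pos t with rfl | ht1
      · apply hii'
        have h2 : i' + 1 = i + 1 := by
          rw [h1, hj]; norm_num
        exact (add_right_cancel h2).symm
      · apply hdmin t ht1 ht
        rw [← h1]
        exact (harcU i' hi'S).2
    · apply hi'1
      rw [heq, hC₂]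
      exact mem_image_of_mem _ (mem_univ _)
  rcases hcyc D hDcyc hDsub with h | h
  · exact hDC₁ h
  · exact hDC₂ h

lemma zmod_one_subsingleton : Subsingleton (ZMod (0+1)) := by
  constructor
  intro x y
  have hx := ZMod.val_lt x
  have hy := ZMod.val_lt y
  exact ZMod.val_injective _ (by omega)

lemma cycle_zero_singleton {V : Type} [DecidableEq V] (f : ZMod (0+1) → V) :
    Finset.image (fun i : ZMod (0+1) => (f i, f (i+1))) Finset.univ = {(f 0, f (0+1))} := by
  haveI := zmod_one_subsingleton
  apply Finset.eq_singleton_iff_unique_mem.2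
  constructor
  · exact mem_image_of_mem _ (mem_univ 0)
  · intro x hx
    obtain ⟨c, -, hc⟩ := mem_image.1 hx
    rw [← hc]
    have hc0 : c = 0 := Subsingleton.elim _ _
    rw [hc0]

lemma key {V : Type} [Fintype V] [DecidableEq V] (C₁ C₂ : Finset (V × V))
    (h₁ : IsCycle C₁) (h₂ : IsCycle C₂) (hne : C₁ ≠ C₂)
    (hint : (C₁ ∩ C₂).Nonempty)
    (hcyc : ∀ C : Finset (V × V), IsCycle C → C ⊆ C₁ ∪ C₂ → C = C₁ ∨ C = C₂) :
    IsPath (C₁ ∩ C₂) ∧ IsPath (C₁ \ C₂) := by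
  classical
  obtain ⟨n, f, hf, hC₁⟩ := h₁
  obtain ⟨m, g, hg, hC₂⟩ := h₂
  obtain ⟨e, he⟩ := hint
  have he₁ : e ∈ C₁ := mem_of_mem_inter_left he
  have he₂ : e ∈ C₂ := mem_of_mem_inter_right he
  obtain ⟨a, -, ha⟩ := mem_image.1 (hC₁ ▸ he₁)
  obtain ⟨b, -, hb⟩ := mem_image.1 (hC₂ ▸ he₂)
  have ha1' : f a = e.1 := by rw [← ha]
  have ha2' : f (a+1) = e.2 := by rw [← ha]
  have hb1' : g b = e.1 := by rw [← hb]
  have hb2' : g (b+1) = e.2 := by rw [← hb]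
  have hn : n ≠ 0 := by
    rintro rfl
    haveI := zmod_one_subsingleton
    have ha1 : a + 1 = a := Subsingleton.elim _ _
    have hee : e.1 = e.2 := by rw [← ha1', ← ha2', ha1]
    have hgb : b + 1 = b := hg (by rw [hb2', hb1']; exact hee.symm)
    have h10 : ((1:ℕ) : ZMod (m+1)) = 0 := by
      push_cast
      exact add_eq_left.mp hgb
    have hm0 : m = 0 := by
      have := Nat.le_of_dvd one_pos ((ZMod.natCast_eq_zero_iff 1 (m+1)).1 h10)
      omega
    subst hm0
    apply hne
    rw [hC₁, hC₂, cycle_zero_singleton, cycle_zero_singleton]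
    have haa : a = (0 : ZMod (0+1)) := Subsingleton.elim _ _
    have hbb : b = (0 : ZMod (0+1)) := Subsingleton.elim _ _
    congr 1
    refine Prod.ext ?_ ?_
    · show f 0 = g 0
      calc f 0 = f a := by rw [haa]
      _ = e.1 := ha1'
      _ = g b := hb1'.symm
      _ = g 0 := by rw [hbb]
    · show f (0+1) = g (0+1)
      calc f (0+1) = f (a+1) := by rw [haa]
      _ = e.2 := ha2'
      _ = g (b+1) := hb2'.symm
      _ = g (0+1) := by rw [hbb]
  have hm : m ≠ 0 := by
    rintro rfl
    haveI := zmod_one_subsingleton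
    have hb1 : b + 1 = b := Subsingleton.elim _ _
    have hee : e.1 = e.2 := by rw [← hb1', ← hb2', hb1]
    have hfa : a + 1 = a := hf (by rw [ha2', ha1']; exact hee.symm)
    have h10 : ((1:ℕ) : ZMod (n+1)) = 0 := by
      push_cast
      exact add_eq_left.mp hfa
    have := Nat.le_of_dvd one_pos ((ZMod.natCast_eq_zero_iff 1 (n+1)).1 h10)
    omega
  set S : Finset (ZMod (n+1)) := Finset.univ.filter (fun i => (f i, f (i+1)) ∈ C₂) with hS
  have hSmem : ∀ i, i ∈ S ↔ (f i, f (i+1)) ∈ C₂ := by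
    intro i
    rw [hS, mem_filter]
    simp
  have haS : a ∈ S := (hSmem a).2 (ha ▸ he₂)
  have hSnu : ∃ z, z ∉ S := by
    by_contra hall
    push_neg at hall
    have hsub : C₁ ⊆ C₂ := by
      intro x hx
      obtain ⟨c, -, hc⟩ := mem_image.1 (hC₁ ▸ hx)
      rw [← hc]
      exact (hSmem c).1 (hall c)
    exact hne (cycle_eq_of_subset ⟨n, f, hf, hC₁⟩ ⟨m, g, hg, hC₂⟩ hsub)
  have hrunend : ∃ i₀ ∈ S, i₀ + 1 ∉ S := by
    by_contra hno
    push_neg at hno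
    obtain ⟨z, hz⟩ := hSnu
    apply hz
    have hiter : ∀ k : ℕ, a + ((k : ℕ) : ZMod (n+1)) ∈ S := by
      intro k
      induction k with
      | zero => simpa using haS
      | succ k ih =>
        have hcast : a + ((k+1 : ℕ) : ZMod (n+1)) = (a + ((k:ℕ) : ZMod (n+1))) + 1 := by
          push_cast; ring
        rw [hcast]
        exact hno _ ih
    have hz2 := hiter (z - a).val
    rw [ZMod.natCast_zmod_val] at hz2
    have : a + (z - a) = z := by ring
    rwa [this] at hz2
  obtain ⟨i₀, hi₀S, hi₀1⟩ := hrunend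
  have hstep : ∀ jj ∈ S, jj ≠ i₀ → jj + 1 ∈ S := by
    intro jj hjj hne'
    by_contra hc
    exact hne' (runEnd_unique hn hf hg hC₁ hC₂ hcyc ((hSmem jj).1 hjj)
      (fun hc2 => hc ((hSmem _).2 hc2)) ((hSmem i₀).1 hi₀S)
      (fun hc2 => hi₀1 ((hSmem _).2 hc2)))
  obtain ⟨r, a', hr1, hrn, hmemS, hmemSc⟩ := interval_of_unique_runEnd hi₀S hSnu hstep
  constructor
  · apply isPath_interval hf a' hr1 hrn
    intro x
    constructor
    · intro hx
      obtain ⟨c, -, hc⟩ := mem_image.1 (hC₁ ▸ (mem_of_mem_inter_left hx))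
      have hcS : c ∈ S := (hSmem c).2 (hc ▸ mem_of_mem_inter_right hx)
      obtain ⟨t, ht, hct⟩ := (hmemS c).1 hcS
      exact ⟨t, ht, by rw [← hc, hct]⟩
    · rintro ⟨t, ht, rfl⟩
      have hcS : a' + ((t:ℕ) : ZMod (n+1)) ∈ S := (hmemS _).2 ⟨t, ht, rfl⟩
      refine mem_inter.2 ⟨?_, (hSmem _).1 hcS⟩
      rw [hC₁]
      exact mem_image_of_mem _ (mem_univ _)
  · apply isPath_interval hf (a' + ((r:ℕ) : ZMod (n+1))) (show 1 ≤ n+1-r by omega)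
      (show n+1-r ≤ n by omega)
    intro x
    have hcast : ∀ t : ℕ, a' + ((r + t:ℕ) : ZMod (n+1)) = a' + ((r:ℕ) : ZMod (n+1)) + ((t:ℕ) : ZMod (n+1)) := by
      intro t; push_cast; ring
    constructor
    · intro hx
      have hx1 : x ∈ C₁ := (mem_sdiff.1 hx).1
      obtain ⟨c, -, hc⟩ := mem_image.1 (hC₁ ▸ hx1)
      have hcS : c ∉ S := fun hcS => (mem_sdiff.1 hx).2 (hc ▸ (hSmem c).1 hcS)
      obtain ⟨t, ht, hct⟩ := (hmemSc c).1 hcS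
      refine ⟨t, ht, ?_⟩
      rw [← hc, hct, hcast]
    · rintro ⟨t, ht, rfl⟩
      have hcS : a' + ((r:ℕ) : ZMod (n+1)) + ((t:ℕ) : ZMod (n+1)) ∉ S :=
        (hmemSc _).2 ⟨t, ht, (hcast t).symm⟩
      refine mem_sdiff.2 ⟨by rw [hC₁]; exact mem_image_of_mem _ (mem_univ _), ?_⟩
      intro hx2
      exact hcS ((hSmem _).2 hx2)

end Stmt8

/-- every 2-cycle is either a pair of arc-disjoint cycles, or the
arc-disjoint union of three paths `P₁, P₂, P₃` with `C₁ = P₁ ∪ P₂` and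
`C₂ = P₁ ∪ P₃`. -/
theorem stmt_8 {V : Type} [Fintype V] [DecidableEq V]
    (E : Finset (V × V)) (w : V × V → ℝ) (C₁ C₂ : Finset (V × V))
    (h : IsTwoCycle E w C₁ C₂) :
    Disjoint C₁ C₂ ∨
    ∃ P₁ P₂ P₃ : Finset (V × V), IsPath P₁ ∧ IsPath P₂ ∧ IsPath P₃ ∧
      Disjoint P₁ P₂ ∧ Disjoint P₁ P₃ ∧ Disjoint P₂ P₃ ∧
      C₁ = P₁ ∪ P₂ ∧ C₂ = P₁ ∪ P₃ := by
  obtain ⟨hc₁, hc₂, -, -, hw₁, hw₂, hcyc⟩ := h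
  by_cases hdisj : Disjoint C₁ C₂
  · exact Or.inl hdisj
  have hne : C₁ ≠ C₂ := by
    rintro rfl
    linarith
  have hint : (C₁ ∩ C₂).Nonempty := by
    rw [Finset.not_disjoint_iff] at hdisj
    obtain ⟨x, h1, h2⟩ := hdisj
    exact ⟨x, mem_inter.2 ⟨h1, h2⟩⟩
  obtain ⟨hP₁, hP₂⟩ := Stmt8.key C₁ C₂ hc₁ hc₂ hne hint hcyc
  obtain ⟨-, hP₃⟩ := Stmt8.key C₂ C₁ hc₂ hc₁ (Ne.symm hne) (by rwa [inter_comm])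
    (fun C hC hCs => Or.symm (hcyc C hC (by rwa [union_comm])))
  refine Or.inr ⟨C₁ ∩ C₂, C₁ \ C₂, C₂ \ C₁, hP₁, hP₂, hP₃, ?_, ?_, ?_, ?_, ?_⟩
  · rw [Finset.disjoint_left]
    intro e h1 h2
    exact (mem_sdiff.1 h2).2 (mem_of_mem_inter_right h1)
  · rw [Finset.disjoint_left]
    intro e h1 h2
    exact (mem_sdiff.1 h2).2 (mem_of_mem_inter_left h1)
  · rw [Finset.disjoint_left]
    intro e h1 h2
    exact (mem_sdiff.1 h2).2 (mem_sdiff.1 h1).1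
  · rw [union_comm, Finset.sdiff_union_inter]
  · rw [inter_comm, union_comm, Finset.sdiff_union_inter]
end

section
/- Let P'(G,w) = { y ∈ ℝ^E : y ≥ 0, flow conservation at every vertex, ∑_e w_e y_e = 0, ∑_e y_e = 1 }. If y is a vertex of P'(G,w), then there do not exist three distinct simple directed cycles C₁, C₂, C₃ with w(C₁) < 0, w(C₂) > 0, and C₁ ∪ C₂ ∪ C₃ contained in the support { e : y_e > 0 } of y. -/
open Finset

/-- Membership in the polytope `P'(G,w)`: nonnegativity, support in `E`, flow
conservation, total weight `0`, and normalization `∑ y = 1`. -/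
def memP' {V : Type} [Fintype V] [DecidableEq V] (E : Finset (V × V))
    (w : V × V → ℝ) (y : V × V → ℝ) : Prop :=
  (∀ e, 0 ≤ y e) ∧ (∀ e, e ∉ E → y e = 0) ∧
  (∀ u : V, ∑ e ∈ E.filter (fun e => e.1 = u), y e
          = ∑ e ∈ E.filter (fun e => e.2 = u), y e) ∧
  (∑ e ∈ E, w e * y e = 0) ∧ (∑ e ∈ E, y e = 1)

section Aux
variable {V : Type} [DecidableEq V]

lemma isCycle_nonempty {C : Finset (V × V)} (h : IsCycle C) : C.Nonempty := by
  obtain ⟨n, f, hf, rfl⟩ := h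
  exact ⟨(f 0, f (0+1)), mem_image.2 ⟨0, mem_univ _, rfl⟩⟩

lemma cycle_src_mem {n : ℕ} {f : ZMod (n+1) → V} {e : V × V}
    (he : e ∈ Finset.image (fun i => (f i, f (i + 1))) Finset.univ) :
    ∃ i, f i = e.1 := by
  obtain ⟨i, -, hi⟩ := mem_image.1 he
  exact ⟨i, by rw [← hi]⟩

/-- uniqueness of out-arc in a cycle -/
lemma cycle_unique_src {n : ℕ} {f : ZMod (n+1) → V} (hf : Function.Injective f)
    {e e' : V × V}
    (he : e ∈ Finset.image (fun i => (f i, f (i + 1))) Finset.univ)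
    (he' : e' ∈ Finset.image (fun i => (f i, f (i + 1))) Finset.univ)
    (h : e.1 = e'.1) : e = e' := by
  obtain ⟨i, -, hi⟩ := mem_image.1 he
  obtain ⟨j, -, hj⟩ := mem_image.1 he'
  have h1 : f i = f j := by
    have : (f i, f (i+1)).1 = (f j, f (j+1)).1 := by rw [hi, hj, h]
    exact this
  have : i = j := hf h1
  rw [← hi, ← hj, this]

/-- a cycle cannot be the disjoint union of two cycles -/
lemma not_union_cycles {C₁ C₂ C₃ : Finset (V × V)} (h1 : IsCycle C₁) (h2 : IsCycle C₂)
    (h3 : IsCycle C₃) (hd : ∀ e, e ∈ C₂ → e ∉ C₃) (hu : C₁ = C₂ ∪ C₃) : False := by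
  obtain ⟨n₁, f₁, hf₁, hC₁⟩ := h1
  have hne2 := isCycle_nonempty h2
  have hne3 := isCycle_nonempty h3
  obtain ⟨n₂, f₂, hf₂, hC₂⟩ := h2
  obtain ⟨n₃, f₃, hf₃, hC₃⟩ := h3
  have hsub2 : C₂ ⊆ C₁ := by rw [hu]; exact subset_union_left
  have hsub3 : C₃ ⊆ C₁ := by rw [hu]; exact subset_union_right
  -- Step 1 : sources of C₂ and C₃ are disjoint
  have step1 : ∀ v, (∃ i, f₂ i = v) → (∃ j, f₃ j = v) → False := by
    rintro v ⟨i, rfl⟩ ⟨j, hj⟩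
    have he2 : (f₂ i, f₂ (i+1)) ∈ C₂ := by rw [hC₂]; exact mem_image.2 ⟨i, mem_univ _, rfl⟩
    have he3 : (f₃ j, f₃ (j+1)) ∈ C₃ := by rw [hC₃]; exact mem_image.2 ⟨j, mem_univ _, rfl⟩
    have heq : (f₂ i, f₂ (i+1)) = (f₃ j, f₃ (j+1)) := by
      apply cycle_unique_src hf₁ (hC₁ ▸ hsub2 he2) (hC₁ ▸ hsub3 he3)
      exact hj.symm
    exact hd _ he2 (heq ▸ he3)
  -- Step 2 : sources stay in C₂'s vertex set
  have step2 : ∀ i : ZMod (n₁+1), (∃ k, f₂ k = f₁ i) → (∃ k, f₂ k = f₁ (i+1)) := by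
    intro i hi
    have harc : (f₁ i, f₁ (i+1)) ∈ C₂ ∪ C₃ := by
      rw [← hu, hC₁]; exact mem_image.2 ⟨i, mem_univ _, rfl⟩
    rcases mem_union.1 harc with h' | h'
    · -- target is in image of f₂: every target is also a source
      rw [hC₂] at h'
      obtain ⟨k, -, hk⟩ := mem_image.1 h'
      have : f₂ (k+1) = f₁ (i+1) := congrArg Prod.snd hk
      exact ⟨k+1, this⟩
    · exfalso
      rw [hC₃] at h'
      obtain ⟨k, -, hk⟩ := mem_image.1 h'
      exact step1 (f₁ i) hi ⟨k, congrArg Prod.fst hk⟩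
  -- Step 3 : some f₁ i₀ is a source of C₂
  obtain ⟨e, he2⟩ := hne2
  obtain ⟨i₀, -, hi₀⟩ := mem_image.1 (hC₁ ▸ hsub2 he2)
  have hbase : ∃ k, f₂ k = f₁ i₀ := by
    rw [hC₂] at he2
    obtain ⟨k, -, hk⟩ := mem_image.1 he2
    refine ⟨k, ?_⟩
    have := congrArg Prod.fst hk
    have h2 := congrArg Prod.fst hi₀
    simp only at this h2
    rw [this, ← h2]
  -- Step 4 : induction around the cycle
  have step4 : ∀ k : ℕ, ∃ m, f₂ m = f₁ (i₀ + (k : ZMod (n₁+1))) := by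
    intro k
    induction k with
    | zero => simpa using hbase
    | succ k ih =>
        have : i₀ + ((k+1 : ℕ) : ZMod (n₁+1)) = (i₀ + (k : ZMod (n₁+1))) + 1 := by
          push_cast; ring
        rw [this]
        exact step2 _ ih
  have step5 : ∀ j : ZMod (n₁+1), ∃ m, f₂ m = f₁ j := by
    intro j
    have := step4 (j - i₀).val
    rwa [ZMod.natCast_rightInverse (j - i₀), add_sub_cancel] at this
  -- Step 6 : contradiction with C₃
  obtain ⟨e', he3⟩ := hne3
  obtain ⟨j, -, hj⟩ := mem_image.1 (hC₁ ▸ hsub3 he3)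
  have hsrc3 : ∃ m, f₃ m = f₁ j := by
    rw [hC₃] at he3
    obtain ⟨m, -, hm⟩ := mem_image.1 he3
    refine ⟨m, ?_⟩
    have := congrArg Prod.fst hm
    have h2 := congrArg Prod.fst hj
    simp only at this h2
    rw [this, ← h2]
  exact step1 (f₁ j) (step5 j) hsrc3

lemma chi_eq_one {C : Finset (V × V)} {e : V × V} (h : e ∈ C) : chi C e = 1 := by
  simp [chi, h]

lemma chi_eq_zero {C : Finset (V × V)} {e : V × V} (h : e ∉ C) : chi C e = 0 := by
  simp [chi, h]

lemma two_cycles_indep {C D : Finset (V × V)} (hC : IsCycle C) (hD : IsCycle D)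
    (hne : C ≠ D) {a b : ℝ} (h : ∀ e, a * chi C e + b * chi D e = 0) :
    a = 0 ∧ b = 0 := by
  by_cases hsub : C ⊆ D
  · have hns : ¬ D ⊆ C := fun h' => hne (subset_antisymm hsub h')
    obtain ⟨e, heD, heC⟩ := not_subset.1 hns
    have hb : b = 0 := by
      have := h e; rw [chi_eq_zero heC, chi_eq_one heD] at this; linarith
    obtain ⟨e', he'⟩ := isCycle_nonempty hC
    have := h e'; rw [chi_eq_one he', hb] at this
    exact ⟨by linarith, hb⟩
  · obtain ⟨e, heC, heD⟩ := not_subset.1 hsub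
    have ha : a = 0 := by
      have := h e; rw [chi_eq_one heC, chi_eq_zero heD] at this; linarith
    obtain ⟨e', he'⟩ := isCycle_nonempty hD
    have := h e'; rw [chi_eq_one he', ha] at this
    exact ⟨ha, by linarith⟩

lemma three_cycles_indep {C₁ C₂ C₃ : Finset (V × V)} (h1 : IsCycle C₁) (h2 : IsCycle C₂)
    (h3 : IsCycle C₃) (h12 : C₁ ≠ C₂) (h13 : C₁ ≠ C₃) (h23 : C₂ ≠ C₃)
    {a b c : ℝ} (h : ∀ e, a * chi C₁ e + b * chi C₂ e + c * chi C₃ e = 0) :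
    a = 0 ∧ b = 0 ∧ c = 0 := by
  have reduce : a = 0 ∨ b = 0 ∨ c = 0 → a = 0 ∧ b = 0 ∧ c = 0 := by
    rintro (ha | hb | hc)
    · have h' := two_cycles_indep h2 h3 h23 (a := b) (b := c)
        (fun e => by have := h e; rw [ha] at this; linarith)
      exact ⟨ha, h'.1, h'.2⟩
    · have h' := two_cycles_indep h1 h3 h13 (a := a) (b := c)
        (fun e => by have := h e; rw [hb] at this; linarith)
      exact ⟨h'.1, hb, h'.2⟩
    · have h' := two_cycles_indep h1 h2 h12 (a := a) (b := b)
        (fun e => by have := h e; rw [hc] at this; linarith)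
      exact ⟨h'.1, h'.2, hc⟩
  apply reduce
  by_contra hall
  push_neg at hall
  obtain ⟨ha, hb, hc⟩ := hall
  exfalso
  have cov1 : ∀ e ∈ C₁, e ∈ C₂ ∨ e ∈ C₃ := by
    intro e he
    by_contra hn; push_neg at hn
    have := h e
    rw [chi_eq_one he, chi_eq_zero hn.1, chi_eq_zero hn.2] at this
    exact ha (by linarith)
  have cov2 : ∀ e ∈ C₂, e ∈ C₁ ∨ e ∈ C₃ := by
    intro e he
    by_contra hn; push_neg at hn
    have := h e
    rw [chi_eq_one he, chi_eq_zero hn.1, chi_eq_zero hn.2] at this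
    exact hb (by linarith)
  have cov3 : ∀ e ∈ C₃, e ∈ C₁ ∨ e ∈ C₂ := by
    intro e he
    by_contra hn; push_neg at hn
    have := h e
    rw [chi_eq_one he, chi_eq_zero hn.1, chi_eq_zero hn.2] at this
    exact hc (by linarith)
  by_cases hT : ∃ e, e ∈ C₁ ∧ e ∈ C₂ ∧ e ∈ C₃
  · -- triple intersection nonempty
    obtain ⟨e₀, he₁, he₂, he₃⟩ := hT
    have habc : a + b + c = 0 := by
      have := h e₀
      rw [chi_eq_one he₁, chi_eq_one he₂, chi_eq_one he₃] at this
      linarith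
    have sub12 : C₁ ⊆ C₂ := by
      intro e he
      by_contra hn
      rcases cov1 e he with h' | h'
      · exact hn h'
      · have := h e
        rw [chi_eq_one he, chi_eq_zero hn, chi_eq_one h'] at this
        exact hb (by linarith)
    have sub21 : C₂ ⊆ C₁ := by
      intro e he
      by_contra hn
      rcases cov2 e he with h' | h'
      · exact hn h'
      · have := h e
        rw [chi_eq_zero hn, chi_eq_one he, chi_eq_one h'] at this
        exact ha (by linarith)
    exact h12 (subset_antisymm sub12 sub21)
  · push_neg at hT
    -- no edge is in all three cycles
    have pair12 : (∃ e, e ∈ C₁ ∧ e ∈ C₂) → a + b = 0 := by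
      rintro ⟨e, he1, he2⟩
      have hn3 : e ∉ C₃ := hT e he1 he2
      have := h e
      rw [chi_eq_one he1, chi_eq_one he2, chi_eq_zero hn3] at this
      linarith
    have pair13 : (∃ e, e ∈ C₁ ∧ e ∈ C₃) → a + c = 0 := by
      rintro ⟨e, he1, he3⟩
      have hn2 : e ∉ C₂ := fun h2' => hT e he1 h2' he3
      have := h e
      rw [chi_eq_one he1, chi_eq_zero hn2, chi_eq_one he3] at this
      linarith
    have pair23 : (∃ e, e ∈ C₂ ∧ e ∈ C₃) → b + c = 0 := by
      rintro ⟨e, he2, he3⟩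
      have hn1 : e ∉ C₁ := fun h1' => hT e h1' he2 he3
      have := h e
      rw [chi_eq_zero hn1, chi_eq_one he2, chi_eq_one he3] at this
      linarith
    by_cases E23 : ∃ e, e ∈ C₂ ∧ e ∈ C₃
    · by_cases E13 : ∃ e, e ∈ C₁ ∧ e ∈ C₃
      · by_cases E12 : ∃ e, e ∈ C₁ ∧ e ∈ C₂
        · exact ha (by linarith [pair12 E12, pair13 E13, pair23 E23])
        · -- C₃ = C₁ ∪ C₂, C₁ and C₂ disjoint
          apply not_union_cycles h3 h1 h2 (fun e h1' h2' => E12 ⟨e, h1', h2'⟩)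
          apply subset_antisymm
          · intro e he
            rcases cov3 e he with h' | h' <;> simp [mem_union, h']
          · apply union_subset
            · intro e he
              rcases cov1 e he with h' | h'
              · exact absurd ⟨e, he, h'⟩ E12
              · exact h'
            · intro e he
              rcases cov2 e he with h' | h'
              · exact absurd ⟨e, h', he⟩ E12
              · exact h'
      · -- C₂ = C₁ ∪ C₃, C₁ and C₃ disjoint
        apply not_union_cycles h2 h1 h3 (fun e h1' h3' => E13 ⟨e, h1', h3'⟩)
        apply subset_antisymm
        · intro e he
          rcases cov2 e he with h' | h' <;> simp [mem_union, h']
        · apply union_subset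
          · intro e he
            rcases cov1 e he with h' | h'
            · exact h'
            · exact absurd ⟨e, he, h'⟩ E13
          · intro e he
            rcases cov3 e he with h' | h'
            · exact absurd ⟨e, h', he⟩ E13
            · exact h'
    · -- C₁ = C₂ ∪ C₃, C₂ and C₃ disjoint
      apply not_union_cycles h1 h2 h3 (fun e h2' h3' => E23 ⟨e, h2', h3'⟩)
      apply subset_antisymm
      · intro e he
        rcases cov1 e he with h' | h' <;> simp [mem_union, h']
      · apply union_subset
        · intro e he
          rcases cov2 e he with h' | h'
          · exact h'
          · exact absurd ⟨e, he, h'⟩ E23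
        · intro e he
          rcases cov3 e he with h' | h'
          · exact h'
          · exact absurd ⟨e, h', he⟩ E23

lemma sum_mul_chi {E C : Finset (V × V)} (hCE : C ⊆ E) (g : V × V → ℝ) :
    ∑ e ∈ E, g e * chi C e = ∑ e ∈ C, g e := by
  simp only [chi, mul_ite, mul_one, mul_zero]
  rw [Finset.sum_ite_mem, Finset.inter_eq_right.2 hCE]

lemma sum_chi {E C : Finset (V × V)} (hCE : C ⊆ E) :
    ∑ e ∈ E, chi C e = (C.card : ℝ) := by
  have := sum_mul_chi hCE (fun _ => (1 : ℝ))
  simpa using this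

lemma cycle_degree {C : Finset (V × V)} (hC : IsCycle C) (u : V) :
    (C.filter (fun e => e.1 = u)).card = (C.filter (fun e => e.2 = u)).card := by
  obtain ⟨n, f, hf, rfl⟩ := hC
  have hg : Function.Injective (fun i : ZMod (n+1) => (f i, f (i+1))) := by
    intro i j hij
    exact hf (congrArg Prod.fst hij)
  rw [Finset.filter_image, Finset.filter_image,
      Finset.card_image_of_injective _ hg, Finset.card_image_of_injective _ hg]
  refine Finset.card_bij' (fun i _ => i - 1) (fun j _ => j + 1) ?_ ?_ ?_ ?_
  · intro i hi
    simp only [mem_filter, mem_univ, true_and] at hi ⊢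
    rwa [sub_add_cancel]
  · intro j hj
    simp only [mem_filter, mem_univ, true_and] at hj ⊢
    exact hj
  · intro i _
    exact sub_add_cancel i 1
  · intro j _
    exact add_sub_cancel_right j 1

lemma chi_conservation [Fintype V] {C E : Finset (V × V)} (hC : IsCycle C) (hCE : C ⊆ E) (u : V) :
    ∑ e ∈ E.filter (fun e => e.1 = u), chi C e
      = ∑ e ∈ E.filter (fun e => e.2 = u), chi C e := by
  have key : ∀ (p : V × V → Prop) [DecidablePred p],
      ∑ e ∈ E.filter p, chi C e = ((C.filter p).card : ℝ) := by
    intro p _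
    simp only [chi]
    rw [Finset.sum_boole]
    have hfe : Finset.filter (fun x => x ∈ C) (E.filter p) = C.filter p := by
      ext e
      simp only [mem_filter]
      constructor
      · rintro ⟨⟨-, hp⟩, hc⟩; exact ⟨hc, hp⟩
      · rintro ⟨hc, hp⟩; exact ⟨⟨hCE hc, hp⟩, hc⟩
    rw [hfe]
  rw [key, key]
  exact_mod_cast congrArg Nat.cast (cycle_degree hC u)

end Aux

/-- the support of a vertex of `P'(G,w)` does not contain three
distinct cycles `C₁, C₂, C₃` with `w(C₁) < 0` and `w(C₂) > 0`. -/
theorem stmt_9 {V : Type} [Fintype V] [DecidableEq V]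
    (E : Finset (V × V)) (w : V × V → ℝ) (y : V × V → ℝ)
    (hv : IsVertexOf {z | memP' E w z} y) :
    ¬ ∃ C₁ C₂ C₃ : Finset (V × V), IsCycle C₁ ∧ IsCycle C₂ ∧ IsCycle C₃ ∧
        C₁ ≠ C₂ ∧ C₁ ≠ C₃ ∧ C₂ ≠ C₃ ∧
        C₁ ⊆ E ∧ C₂ ⊆ E ∧ C₃ ⊆ E ∧
        (∑ e ∈ C₁, w e) < 0 ∧ 0 < (∑ e ∈ C₂, w e) ∧
        ∀ e ∈ C₁ ∪ C₂ ∪ C₃, 0 < y e := by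
  rintro ⟨C₁, C₂, C₃, h1, h2, h3, h12, h13, h23, hE1, hE2, hE3, hw1, hw2, hpos⟩
  obtain ⟨hyP, hnv⟩ := hv
  obtain ⟨hy0, hysupp, hycons, hyw, hysum⟩ := hyP
  set w₁ : ℝ := ∑ e ∈ C₁, w e with hw₁def
  set w₂ : ℝ := ∑ e ∈ C₂, w e with hw₂def
  set w₃ : ℝ := ∑ e ∈ C₃, w e with hw₃def
  set n₁ : ℝ := (C₁.card : ℝ) with hn₁def
  set n₂ : ℝ := (C₂.card : ℝ) with hn₂def
  set n₃ : ℝ := (C₃.card : ℝ) with hn₃def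
  have hn₁pos : 0 < n₁ := by
    rw [hn₁def]; exact_mod_cast Finset.card_pos.2 (isCycle_nonempty h1)
  have hn₂pos : 0 < n₂ := by
    rw [hn₂def]; exact_mod_cast Finset.card_pos.2 (isCycle_nonempty h2)
  set a : ℝ := w₂ * n₃ - w₃ * n₂ with hadef
  set b : ℝ := w₃ * n₁ - w₁ * n₃ with hbdef
  set c : ℝ := w₁ * n₂ - w₂ * n₁ with hcdef
  have hcneg : c < 0 := by
    have ha1 : w₁ * n₂ < 0 := mul_neg_of_neg_of_pos hw1 hn₂pos
    have ha2 : 0 < w₂ * n₁ := mul_pos hw2 hn₁pos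
    rw [hcdef]; linarith
  set z : (V × V) → ℝ := fun e => a * chi C₁ e + b * chi C₂ e + c * chi C₃ e with hzdef
  -- z is nonzero
  have hz_ne : ∃ e, z e ≠ 0 := by
    by_contra hz; push_neg at hz
    have h' := three_cycles_indep h1 h2 h3 h12 h13 h23 (a := a) (b := b) (c := c)
      (fun e => hz e)
    exact absurd h'.2.2 (ne_of_lt hcneg)
  -- support of z
  have hz_supp : ∀ e, e ∉ C₁ ∪ C₂ ∪ C₃ → z e = 0 := by
    intro e he
    simp only [mem_union, not_or] at he
    rw [hzdef]
    simp [chi_eq_zero he.1.1, chi_eq_zero he.1.2, chi_eq_zero he.2]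
  have hSE : C₁ ∪ C₂ ∪ C₃ ⊆ E := union_subset (union_subset hE1 hE2) hE3
  -- sums of z over any finset
  have sum_z_eq : ∀ s' : Finset (V × V), ∑ e ∈ s', z e
      = a * (∑ e ∈ s', chi C₁ e) + b * (∑ e ∈ s', chi C₂ e) + c * (∑ e ∈ s', chi C₃ e) := by
    intro s'
    rw [hzdef]
    simp [Finset.sum_add_distrib, Finset.mul_sum]
  have hzw : ∑ e ∈ E, w e * z e = 0 := by
    have step : ∑ e ∈ E, w e * z e
        = a * (∑ e ∈ E, w e * chi C₁ e) + b * (∑ e ∈ E, w e * chi C₂ e)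
          + c * (∑ e ∈ E, w e * chi C₃ e) := by
      rw [hzdef, Finset.mul_sum, Finset.mul_sum, Finset.mul_sum,
        ← Finset.sum_add_distrib, ← Finset.sum_add_distrib]
      apply Finset.sum_congr rfl
      intro e _
      ring
    rw [step, sum_mul_chi hE1, sum_mul_chi hE2, sum_mul_chi hE3,
      ← hw₁def, ← hw₂def, ← hw₃def, hadef, hbdef, hcdef]
    ring
  have hzsum : ∑ e ∈ E, z e = 0 := by
    rw [sum_z_eq, sum_chi hE1, sum_chi hE2, sum_chi hE3,
      ← hn₁def, ← hn₂def, ← hn₃def, hadef, hbdef, hcdef]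
    ring
  have hzcons : ∀ u : V, ∑ e ∈ E.filter (fun e => e.1 = u), z e
      = ∑ e ∈ E.filter (fun e => e.2 = u), z e := by
    intro u
    rw [sum_z_eq, sum_z_eq, chi_conservation h1 hE1 u, chi_conservation h2 hE2 u,
      chi_conservation h3 hE3 u]
  -- choice of epsilon
  have hSne : (C₁ ∪ C₂ ∪ C₃).Nonempty := by
    obtain ⟨e, he⟩ := isCycle_nonempty h1
    exact ⟨e, mem_union_left _ (mem_union_left _ he)⟩
  set ε : ℝ := (C₁ ∪ C₂ ∪ C₃).inf' hSne (fun e => y e / (|z e| + 1)) with hεdef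
  have hεpos : 0 < ε := by
    rw [hεdef]
    exact (Finset.lt_inf'_iff hSne).2 (fun e he => div_pos (hpos e he) (by positivity))
  have hkey : ∀ e, ε * |z e| ≤ y e := by
    intro e
    by_cases he : e ∈ C₁ ∪ C₂ ∪ C₃
    · have h1' : ε ≤ y e / (|z e| + 1) := by
        rw [hεdef]; exact Finset.inf'_le _ he
      have h2' : (0:ℝ) < |z e| + 1 := by positivity
      have h3' : ε * (|z e| + 1) ≤ y e := (le_div_iff₀ h2').1 h1'
      nlinarith [abs_nonneg (z e)]
    · rw [hz_supp e he, abs_zero, mul_zero]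
      exact hy0 e
  -- the two perturbed points
  have hmem : ∀ s : ℝ, |s| = ε → memP' E w (fun e => y e + s * z e) := by
    intro s hs
    have hsabs : ∀ e, |s * z e| ≤ y e := by
      intro e
      rw [abs_mul, hs]
      exact hkey e
    refine ⟨?_, ?_, ?_, ?_, ?_⟩
    · intro e
      show 0 ≤ y e + s * z e
      have h1' := hsabs e
      have h2' := neg_abs_le (s * z e)
      linarith
    · intro e heE
      show y e + s * z e = 0
      have hz0 : z e = 0 := hz_supp e (fun hm => heE (hSE hm))
      rw [hysupp e heE, hz0, mul_zero, add_zero]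
    · intro u
      show ∑ e ∈ E.filter (fun e => e.1 = u), (y e + s * z e)
          = ∑ e ∈ E.filter (fun e => e.2 = u), (y e + s * z e)
      rw [Finset.sum_add_distrib, Finset.sum_add_distrib,
        ← Finset.mul_sum, ← Finset.mul_sum, hycons u, hzcons u]
    · show ∑ e ∈ E, w e * (y e + s * z e) = 0
      have : ∀ e ∈ E, w e * (y e + s * z e) = w e * y e + s * (w e * z e) := by
        intro e _
        ring
      rw [Finset.sum_congr rfl this, Finset.sum_add_distrib, hyw, ← Finset.mul_sum, hzw]
      ring
    · show ∑ e ∈ E, (y e + s * z e) = 1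
      rw [Finset.sum_add_distrib, hysum, ← Finset.mul_sum, hzsum]
      ring
  obtain ⟨e₀, he₀⟩ := hz_ne
  apply hnv
  refine ⟨(fun e => y e + ε * z e), hmem ε (abs_of_pos hεpos),
    (fun e => y e + (-ε) * z e), hmem (-ε) (by rw [abs_neg, abs_of_pos hεpos]),
    ?_, 1/2, by norm_num, by norm_num, ?_⟩
  · intro hcontra
    have h' : y e₀ + ε * z e₀ = y e₀ + (-ε) * z e₀ := congrFun hcontra e₀
    have h2' : (2 * ε) * z e₀ = 0 := by linarith
    rcases mul_eq_zero.1 h2' with h' | h'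
    · linarith
    · exact he₀ h'
  · funext e
    simp only [Pi.add_apply, Pi.smul_apply, smul_eq_mul]
    ring
end

section
/- For each k ≥ 1, there exists a weighted directed graph (G,w) with O(k) vertices and arcs that has at least 2^k positive-weight simple directed cycles but only 2k 2-cycles. Concretely: take a directed cycle (x₁,y₁,x₂,y₂,…,x_k,y_k) of length 2k with all arcs of weight -1, and for each i add two parallel two-arc paths (x_i,z_i,y_i) and (x_i,z'_i,y_i), each arc of weight 2k. Then the number of positive-weight cycles in this graph exceeds 2^k, while the number of 2-cycles is exactly 2k. -/
open Finset

/-- Vertices: `(0,i) = xᵢ`, `(1,i) = yᵢ`, `(2,i) = zᵢ`, `(3,i) = z'ᵢ`.  The arcs: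
the base `2k`-cycle `xᵢ → yᵢ → xᵢ₊₁`, plus the parallel paths `xᵢ → zᵢ → yᵢ`
and `xᵢ → z'ᵢ → yᵢ`. -/
def gE (k : ℕ) [NeZero k] : Finset ((Fin 4 × ZMod k) × (Fin 4 × ZMod k)) :=
  (Finset.univ.image fun i : ZMod k => (((0 : Fin 4), i), ((1 : Fin 4), i))) ∪
  (Finset.univ.image fun i : ZMod k => (((1 : Fin 4), i), ((0 : Fin 4), i + 1))) ∪
  (Finset.univ.image fun i : ZMod k => (((0 : Fin 4), i), ((2 : Fin 4), i))) ∪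
  (Finset.univ.image fun i : ZMod k => (((2 : Fin 4), i), ((1 : Fin 4), i))) ∪
  (Finset.univ.image fun i : ZMod k => (((0 : Fin 4), i), ((3 : Fin 4), i))) ∪
  (Finset.univ.image fun i : ZMod k => (((3 : Fin 4), i), ((1 : Fin 4), i)))

/-- Arc weights: the base-cycle arcs (between `x`- and `y`-vertices) have
weight `-1`; all detour arcs have weight `2k`. -/
def gw (k : ℕ) [NeZero k] : (Fin 4 × ZMod k) × (Fin 4 × ZMod k) → ℝ :=
  fun e => if e.1.1 ≤ 1 ∧ e.2.1 ≤ 1 then -1 else 2 * k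

set_option linter.unusedSectionVars false
set_option linter.unreachableTactic false
set_option linter.unusedTactic false
section Dev
variable {k : ℕ} [NeZero k]

/-- return arc -/
def ret (i : ZMod k) : (Fin 4 × ZMod k) × (Fin 4 × ZMod k) :=
  (((1 : Fin 4), i), ((0 : Fin 4), i + 1))

/-- pass arcs -/
def pA (i : ZMod k) (c : Fin 3) : Finset ((Fin 4 × ZMod k) × (Fin 4 × ZMod k)) :=
  if c = 0 then {(((0 : Fin 4), i), ((1 : Fin 4), i))}
  else if c = 1 then {(((0 : Fin 4), i), ((2 : Fin 4), i)), (((2 : Fin 4), i), ((1 : Fin 4), i))}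
  else {(((0 : Fin 4), i), ((3 : Fin 4), i)), (((3 : Fin 4), i), ((1 : Fin 4), i))}

def Cyc (c : ZMod k → Fin 3) : Finset ((Fin 4 × ZMod k) × (Fin 4 × ZMod k)) :=
  Finset.univ.biUnion (fun i => pA i (c i) ∪ {ret i})

lemma mem_Cyc {c : ZMod k → Fin 3} {e} :
    e ∈ Cyc c ↔ ∃ i, e ∈ pA i (c i) ∨ e = ret i := by
  simp only [Cyc, Finset.mem_biUnion, Finset.mem_univ, true_and, Finset.mem_union,
    Finset.mem_singleton]

lemma mem_pA_snd {i : ZMod k} {c : Fin 3} {e} (h : e ∈ pA i c) : e.1.2 = i := by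
  fin_cases c <;> simp [pA] at h <;>
    first
      | (subst h; rfl)
      | (rcases h with h|h <;> subst h <;> rfl)

lemma ret_mem_Cyc {c : ZMod k → Fin 3} (i : ZMod k) : ret i ∈ Cyc c :=
  mem_Cyc.2 ⟨i, Or.inr rfl⟩

lemma pA_mem_Cyc {c : ZMod k → Fin 3} {i : ZMod k} {e} (h : e ∈ pA i (c i)) : e ∈ Cyc c :=
  mem_Cyc.2 ⟨i, Or.inl h⟩

lemma dir_mem_Cyc_iff {c : ZMod k → Fin 3} {i : ZMod k} :
    (((0 : Fin 4), i), ((1 : Fin 4), i)) ∈ Cyc c ↔ c i = 0 := by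
  rw [mem_Cyc]
  constructor
  · rintro ⟨j, h | h⟩
    · have hj : j = i := by have := mem_pA_snd h; simpa using this.symm
      subst hj
      rcases hc : c j with ⟨cv, hcv⟩
      interval_cases cv <;> simp_all [pA] <;> simp_all [Prod.ext_iff]
    · simp [ret, Prod.ext_iff] at h
  · intro h; exact ⟨i, Or.inl (by simp [pA, h])⟩

lemma mem_gE {e} : e ∈ gE k ↔ ∃ i : ZMod k,
    e = (((0 : Fin 4), i), ((1 : Fin 4), i)) ∨ e = ret i ∨
    e = (((0 : Fin 4), i), ((2 : Fin 4), i)) ∨ e = (((2 : Fin 4), i), ((1 : Fin 4), i)) ∨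
    e = (((0 : Fin 4), i), ((3 : Fin 4), i)) ∨ e = (((3 : Fin 4), i), ((1 : Fin 4), i)) := by
  simp only [gE, Finset.mem_union, Finset.mem_image, Finset.mem_univ, true_and, ret]
  constructor
  · rintro (((((⟨i,h⟩|⟨i,h⟩)|⟨i,h⟩)|⟨i,h⟩)|⟨i,h⟩)|⟨i,h⟩) <;> exact ⟨i, by tauto⟩
  · rintro ⟨i, h|h|h|h|h|h⟩ <;> subst h <;> tauto

lemma Cyc_subset_gE {c : ZMod k → Fin 3} : Cyc c ⊆ gE k := by
  intro e he
  rw [mem_Cyc] at he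
  obtain ⟨i, h | h⟩ := he
  · rcases hc : c i with ⟨cv, hcv⟩
    rw [mem_gE]
    interval_cases cv <;> rw [hc] at h <;> simp [pA] at h <;>
      first
        | exact ⟨i, by tauto⟩
        | (rcases h with h|h <;> exact ⟨i, by tauto⟩)
  · exact mem_gE.2 ⟨i, by tauto⟩

lemma gE_src1 {i : ZMod k} {b} (h : (((1 : Fin 4), i), b) ∈ gE k) : b = ((0 : Fin 4), i + 1) := by
  rw [mem_gE] at h
  obtain ⟨j, h|h|h|h|h|h⟩ := h <;> simp [ret, Prod.ext_iff] at h <;>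
    (obtain ⟨h1, h2, h3⟩ := h; subst h1; simp [Prod.ext_iff, h2, h3])

lemma gE_src2 {i : ZMod k} {b} (h : (((2 : Fin 4), i), b) ∈ gE k) : b = ((1 : Fin 4), i) := by
  rw [mem_gE] at h
  obtain ⟨j, h|h|h|h|h|h⟩ := h <;> simp [ret, Prod.ext_iff] at h <;>
    (obtain ⟨h1, h2, h3⟩ := h; subst h1; simp [Prod.ext_iff, h2, h3])

lemma gE_src3 {i : ZMod k} {b} (h : (((3 : Fin 4), i), b) ∈ gE k) : b = ((1 : Fin 4), i) := by
  rw [mem_gE] at h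
  obtain ⟨j, h|h|h|h|h|h⟩ := h <;> simp [ret, Prod.ext_iff] at h <;>
    (obtain ⟨h1, h2, h3⟩ := h; subst h1; simp [Prod.ext_iff, h2, h3])

lemma gE_src0 {i : ZMod k} {b} (h : (((0 : Fin 4), i), b) ∈ gE k) :
    b = ((1 : Fin 4), i) ∨ b = ((2 : Fin 4), i) ∨ b = ((3 : Fin 4), i) := by
  rw [mem_gE] at h
  obtain ⟨j, h|h|h|h|h|h⟩ := h <;> simp [ret, Prod.ext_iff] at h <;>
    (obtain ⟨h1, h2, h3⟩ := h; subst h1; simp [Prod.ext_iff, h2, h3])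

lemma gE_tgt0 {i : ZMod k} {a} (h : (a, ((0 : Fin 4), i)) ∈ gE k) : a = ((1 : Fin 4), i - 1) := by
  rw [mem_gE] at h
  obtain ⟨j, h|h|h|h|h|h⟩ := h <;> simp [ret, Prod.ext_iff] at h
  obtain ⟨⟨h1, h2⟩, h3⟩ := h
  subst h3; simp [Prod.ext_iff, h1, h2]

lemma gE_tgt2 {i : ZMod k} {a} (h : (a, ((2 : Fin 4), i)) ∈ gE k) : a = ((0 : Fin 4), i) := by
  rw [mem_gE] at h
  obtain ⟨j, h|h|h|h|h|h⟩ := h <;> simp [ret, Prod.ext_iff] at h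
  obtain ⟨⟨h1, h2⟩, h3⟩ := h
  subst h3; simp [Prod.ext_iff, h1, h2]

lemma gE_tgt3 {i : ZMod k} {a} (h : (a, ((3 : Fin 4), i)) ∈ gE k) : a = ((0 : Fin 4), i) := by
  rw [mem_gE] at h
  obtain ⟨j, h|h|h|h|h|h⟩ := h <;> simp [ret, Prod.ext_iff] at h
  obtain ⟨⟨h1, h2⟩, h3⟩ := h
  subst h3; simp [Prod.ext_iff, h1, h2]

lemma gE_tgt1 {i : ZMod k} {a} (h : (a, ((1 : Fin 4), i)) ∈ gE k) :
    a = ((0 : Fin 4), i) ∨ a = ((2 : Fin 4), i) ∨ a = ((3 : Fin 4), i) := by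
  rw [mem_gE] at h
  obtain ⟨j, h|h|h|h|h|h⟩ := h <;> simp [ret, Prod.ext_iff] at h <;>
    (obtain ⟨⟨h1, h2⟩, h3⟩ := h; subst h3; simp [Prod.ext_iff, h1, h2])
section CycFacts
variable {V : Type} [DecidableEq V] {C : Finset (V × V)} {a b b' a' : V}

lemma IsCycle.nonempty' (hC : IsCycle C) : C.Nonempty := by
  obtain ⟨n, f, hf, rfl⟩ := hC
  exact ⟨_, Finset.mem_image.2 ⟨0, Finset.mem_univ _, rfl⟩⟩

lemma IsCycle.succ (hC : IsCycle C) (h : (a, b) ∈ C) : ∃ d, (b, d) ∈ C := by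
  obtain ⟨n, f, hf, rfl⟩ := hC
  simp only [Finset.mem_image, Finset.mem_univ, true_and, Prod.mk.injEq] at h ⊢
  obtain ⟨i, hi1, hi2⟩ := h
  exact ⟨f (i + 1 + 1), i + 1, hi2, rfl⟩

lemma IsCycle.pred (hC : IsCycle C) (h : (a, b) ∈ C) : ∃ d, (d, a) ∈ C := by
  obtain ⟨n, f, hf, rfl⟩ := hC
  simp only [Finset.mem_image, Finset.mem_univ, true_and, Prod.mk.injEq] at h ⊢
  obtain ⟨i, hi1, hi2⟩ := h
  exact ⟨f (i - 1), i - 1, rfl, by rw [sub_add_cancel, hi1]⟩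

lemma IsCycle.out_unique (hC : IsCycle C) (h1 : (a, b) ∈ C) (h2 : (a, b') ∈ C) : b = b' := by
  obtain ⟨n, f, hf, rfl⟩ := hC
  simp only [Finset.mem_image, Finset.mem_univ, true_and, Prod.mk.injEq] at h1 h2
  obtain ⟨i, hi1, hi2⟩ := h1
  obtain ⟨j, hj1, hj2⟩ := h2
  have : i = j := hf (hi1.trans hj1.symm)
  subst this; rw [← hi2, ← hj2]

lemma IsCycle.in_unique (hC : IsCycle C) (h1 : (a, b) ∈ C) (h2 : (a', b) ∈ C) : a = a' := by
  obtain ⟨n, f, hf, rfl⟩ := hC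
  simp only [Finset.mem_image, Finset.mem_univ, true_and, Prod.mk.injEq] at h1 h2
  obtain ⟨i, hi1, hi2⟩ := h1
  obtain ⟨j, hj1, hj2⟩ := h2
  have h : i = j := by
    have := hf (hi2.trans hj2.symm)
    exact add_right_cancel this
  subst h; rw [← hi1, ← hj1]

end CycFacts
lemma classify {C : Finset ((Fin 4 × ZMod k) × (Fin 4 × ZMod k))}
    (hC : IsCycle C) (hE : C ⊆ gE k) : ∃ c : ZMod k → Fin 3, C = Cyc c := by
  -- step A
  have stepA : ∀ (a : Fin 4 × ZMod k) (i : ZMod k), (a, ((1 : Fin 4), i)) ∈ C → ret i ∈ C := by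
    intro a i h
    obtain ⟨b, hb⟩ := hC.succ h
    have := gE_src1 (hE hb)
    subst this
    exact hb
  -- reach
  have reach : ∀ i : ZMod k, ret i ∈ C → ret (i + 1) ∈ C := by
    intro i h
    obtain ⟨b, hb⟩ := hC.succ h
    rcases gE_src0 (hE hb) with h' | h' | h'
    · subst h'; exact stepA _ _ hb
    · subst h'
      obtain ⟨d, hd⟩ := hC.succ hb
      have := gE_src2 (hE hd); subst this
      exact stepA _ _ hd
    · subst h'
      obtain ⟨d, hd⟩ := hC.succ hb
      have := gE_src3 (hE hd); subst this
      exact stepA _ _ hd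
  -- start
  have start : ∃ i : ZMod k, ret i ∈ C := by
    obtain ⟨e, he⟩ := hC.nonempty'
    rcases mem_gE.1 (hE he) with ⟨i, h|h|h|h|h|h⟩ <;> subst h
    · exact ⟨i, stepA _ _ he⟩
    · exact ⟨i, he⟩
    · obtain ⟨d, hd⟩ := hC.succ he
      have := gE_src2 (hE hd); subst this
      exact ⟨i, stepA _ _ hd⟩
    · exact ⟨i, stepA _ _ he⟩
    · obtain ⟨d, hd⟩ := hC.succ he
      have := gE_src3 (hE hd); subst this
      exact ⟨i, stepA _ _ hd⟩
    · exact ⟨i, stepA _ _ he⟩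
  -- all returns
  have all_ret : ∀ i : ZMod k, ret i ∈ C := by
    obtain ⟨i₀, h₀⟩ := start
    have key : ∀ m : ℕ, ret (i₀ + (m : ZMod k)) ∈ C := by
      intro m
      induction m with
      | zero => simpa using h₀
      | succ m ih =>
          have : (i₀ + ((m + 1 : ℕ) : ZMod k)) = (i₀ + (m : ZMod k)) + 1 := by
            push_cast; ring
          rw [this]
          exact reach _ ih
    intro j
    have : (((j - i₀).val : ℕ) : ZMod k) = j - i₀ := ZMod.natCast_rightInverse _
    have h2 := key (j - i₀).val
    rwa [this, add_sub_cancel] at h2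
  -- out-arc of each x
  have x_out : ∀ i : ZMod k, ∃ b, (((0 : Fin 4), i), b) ∈ C := by
    intro i
    have h := all_ret (i - 1)
    have h' : ((((1 : Fin 4), i - 1)), ((0 : Fin 4), i)) ∈ C := by
      simpa [ret, sub_add_cancel] using h
    exact hC.succ h'
  classical
  refine ⟨fun i => if (((0 : Fin 4), i), ((1 : Fin 4), i)) ∈ C then 0
      else if (((0 : Fin 4), i), ((2 : Fin 4), i)) ∈ C then 1 else 2, ?_⟩
  ext e
  constructor
  · intro he
    rcases mem_gE.1 (hE he) with ⟨i, h|h|h|h|h|h⟩ <;> subst h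
    · exact pA_mem_Cyc (i := i) (by simp [pA, he])
    · exact ret_mem_Cyc i
    · have hd : (((0 : Fin 4), i), ((1 : Fin 4), i)) ∉ C := by
        intro hd
        have := hC.out_unique hd he
        simp [Prod.ext_iff] at this
      exact pA_mem_Cyc (i := i) (by simp [pA, hd, he])
    · obtain ⟨a, ha⟩ := hC.pred he
      have := gE_tgt2 (hE ha); subst this
      have hd : (((0 : Fin 4), i), ((1 : Fin 4), i)) ∉ C := by
        intro hd
        have := hC.out_unique hd ha
        simp [Prod.ext_iff] at this
      exact pA_mem_Cyc (i := i) (by simp [pA, hd, ha])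
    · have hd : (((0 : Fin 4), i), ((1 : Fin 4), i)) ∉ C := by
        intro hd
        have := hC.out_unique hd he
        simp [Prod.ext_iff] at this
      have hd2 : (((0 : Fin 4), i), ((2 : Fin 4), i)) ∉ C := by
        intro hd2
        have := hC.out_unique hd2 he
        simp [Prod.ext_iff] at this
      exact pA_mem_Cyc (i := i) (by simp [pA, hd, hd2])
    · obtain ⟨a, ha⟩ := hC.pred he
      have := gE_tgt3 (hE ha); subst this
      have hd : (((0 : Fin 4), i), ((1 : Fin 4), i)) ∉ C := by
        intro hd
        have := hC.out_unique hd ha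
        simp [Prod.ext_iff] at this
      have hd2 : (((0 : Fin 4), i), ((2 : Fin 4), i)) ∉ C := by
        intro hd2
        have := hC.out_unique hd2 ha
        simp [Prod.ext_iff] at this
      exact pA_mem_Cyc (i := i) (by simp [pA, hd, hd2])
  · intro he
    rcases mem_Cyc.1 he with ⟨i, h | h⟩
    · by_cases h0 : (((0 : Fin 4), i), ((1 : Fin 4), i)) ∈ C
      · simp [pA, h0] at h
        subst h; exact h0
      · by_cases h1 : (((0 : Fin 4), i), ((2 : Fin 4), i)) ∈ C
        · simp [pA, h0, h1] at h
          rcases h with h | h <;> subst h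
          · exact h1
          · obtain ⟨d, hd⟩ := hC.succ h1
            have := gE_src2 (hE hd); subst this
            exact hd
        · simp [pA, h0, h1] at h
          obtain ⟨b, hb⟩ := x_out i
          rcases gE_src0 (hE hb) with h' | h' | h' <;> subst h'
          · exact absurd hb h0
          · exact absurd hb h1
          · rcases h with h | h <;> subst h
            · exact hb
            · obtain ⟨d, hd⟩ := hC.succ hb
              have := gE_src3 (hE hd); subst this
              exact hd
    · subst h; exact all_ret i
lemma fin3_cases (a : Fin 3) : a = 0 ∨ a = 1 ∨ a = 2 := by fin_cases a <;> simp

lemma in2_mem_Cyc_iff {c : ZMod k → Fin 3} {i : ZMod k} :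
    (((0 : Fin 4), i), ((2 : Fin 4), i)) ∈ Cyc c ↔ c i = 1 := by
  rw [mem_Cyc]
  constructor
  · rintro ⟨j, h | h⟩
    · have hj : j = i := by have := mem_pA_snd h; simpa using this.symm
      subst hj
      rcases fin3_cases (c j) with hc | hc | hc <;> rw [hc] at h <;> simp [pA] at h <;>
        first
          | exact hc
          | simp_all [Prod.ext_iff]
    · simp [ret, Prod.ext_iff] at h
  · intro h; exact ⟨i, Or.inl (by simp [pA, h])⟩

lemma in3_mem_Cyc_iff {c : ZMod k → Fin 3} {i : ZMod k} :
    (((0 : Fin 4), i), ((3 : Fin 4), i)) ∈ Cyc c ↔ c i = 2 := by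
  rw [mem_Cyc]
  constructor
  · rintro ⟨j, h | h⟩
    · have hj : j = i := by have := mem_pA_snd h; simpa using this.symm
      subst hj
      rcases fin3_cases (c j) with hc | hc | hc <;> rw [hc] at h <;> simp [pA] at h <;>
        first
          | exact hc
          | simp_all [Prod.ext_iff]
    · simp [ret, Prod.ext_iff] at h
  · intro h; exact ⟨i, Or.inl (by simp [pA, h])⟩

lemma Cyc_ext {c c' : ZMod k → Fin 3} (h : Cyc c = Cyc c') : c = c' := by
  funext i
  rcases fin3_cases (c i) with hc | hc | hc <;>
  rcases fin3_cases (c' i) with hc' | hc' | hc' <;>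
  try (rw [hc, hc'])
  · have := in2_mem_Cyc_iff.2 hc'; rw [← h] at this; rw [in2_mem_Cyc_iff] at this; simp_all
  · have := in3_mem_Cyc_iff.2 hc'; rw [← h] at this; rw [in3_mem_Cyc_iff] at this; simp_all
  · have := in2_mem_Cyc_iff.2 hc; rw [h] at this; rw [in2_mem_Cyc_iff] at this; simp_all
  · have := in2_mem_Cyc_iff.2 hc; rw [h] at this; rw [in2_mem_Cyc_iff] at this; simp_all
  · have := in3_mem_Cyc_iff.2 hc; rw [h] at this; rw [in3_mem_Cyc_iff] at this; simp_all
  · have := in3_mem_Cyc_iff.2 hc; rw [h] at this; rw [in3_mem_Cyc_iff] at this; simp_all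

lemma not_src2 {c : ZMod k → Fin 3} {j : ZMod k} (h : c j ≠ 1) :
    ∀ e ∈ Cyc c, e.1 ≠ ((2 : Fin 4), j) := by
  intro e he
  rcases mem_Cyc.1 he with ⟨i, hp | hp⟩
  · rcases fin3_cases (c i) with hc | hc | hc
    · rw [hc] at hp; simp [pA] at hp; subst hp; simp [Prod.ext_iff]
    · rw [hc] at hp; simp [pA] at hp
      rcases hp with hp | hp
      · subst hp; simp [Prod.ext_iff]
      · subst hp; simp [Prod.ext_iff]; rintro rfl; exact h hc
    · rw [hc] at hp; simp [pA] at hp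
      rcases hp with hp | hp <;> subst hp <;> simp [Prod.ext_iff]
  · subst hp; simp [ret, Prod.ext_iff]

lemma not_src3 {c : ZMod k → Fin 3} {j : ZMod k} (h : c j ≠ 2) :
    ∀ e ∈ Cyc c, e.1 ≠ ((3 : Fin 4), j) := by
  intro e he
  rcases mem_Cyc.1 he with ⟨i, hp | hp⟩
  · rcases fin3_cases (c i) with hc | hc | hc
    · rw [hc] at hp; simp [pA] at hp; subst hp; simp [Prod.ext_iff]
    · rw [hc] at hp; simp [pA] at hp
      rcases hp with hp | hp <;> subst hp <;> simp [Prod.ext_iff]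
    · rw [hc] at hp; simp [pA] at hp
      rcases hp with hp | hp
      · subst hp; simp [Prod.ext_iff]
      · subst hp; simp [Prod.ext_iff]; rintro rfl; exact h hc
  · subst hp; simp [ret, Prod.ext_iff]

lemma mem_part_snd {i : ZMod k} {c : Fin 3} {e} (h : e ∈ pA i c ∪ {ret i}) : e.1.2 = i := by
  rcases Finset.mem_union.1 h with h | h
  · exact mem_pA_snd h
  · rw [Finset.mem_singleton.1 h]; rfl

lemma Cyc_parts_disjoint (c : ZMod k → Fin 3) :
    Set.PairwiseDisjoint (Finset.univ : Finset (ZMod k))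
      (fun i => pA i (c i) ∪ {ret i}) := by
  intro i _ j _ hij
  simp only [Finset.disjoint_left]
  intro e he he'
  exact hij (by rw [← mem_part_snd he, mem_part_snd he'])

lemma pA_zero (i : ZMod k) : pA i (0 : Fin 3) = {(((0 : Fin 4), i), ((1 : Fin 4), i))} := by
  simp [pA]

lemma pA_one (i : ZMod k) : pA i (1 : Fin 3)
    = {(((0 : Fin 4), i), ((2 : Fin 4), i)), (((2 : Fin 4), i), ((1 : Fin 4), i))} := by
  simp [pA]

lemma pA_two (i : ZMod k) : pA i (2 : Fin 3)
    = {(((0 : Fin 4), i), ((3 : Fin 4), i)), (((3 : Fin 4), i), ((1 : Fin 4), i))} := by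
  simp [pA]

lemma weight_Cyc (c : ZMod k → Fin 3) :
    ∑ e ∈ Cyc c, gw k e = ∑ i : ZMod k, (if c i = 0 then (-2 : ℝ) else 4 * k - 1) := by
  rw [Cyc, Finset.sum_biUnion (Cyc_parts_disjoint c)]
  refine Finset.sum_congr rfl (fun i _ => ?_)
  rcases fin3_cases (c i) with hc | hc | hc <;> rw [hc]
  · rw [pA_zero, Finset.sum_union (by simp [Prod.ext_iff, ret]), Finset.sum_singleton,
      Finset.sum_singleton]
    norm_num [gw, ret]
  · rw [pA_one, Finset.sum_union (by simp [Prod.ext_iff, ret]),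
      Finset.sum_pair (by simp [Prod.ext_iff]), Finset.sum_singleton]
    norm_num [gw, ret, show ¬((2:Fin 4) ≤ 1) from by decide]
    ring
  · rw [pA_two, Finset.sum_union (by simp [Prod.ext_iff, ret]),
      Finset.sum_pair (by simp [Prod.ext_iff]), Finset.sum_singleton]
    norm_num [gw, ret, show ¬((3:Fin 4) ≤ 1) from by decide,
      show ¬((2:Fin 3) = 0) from by decide]
    ring
lemma card_Cyc0 : (Cyc (k := k) (fun _ => 0)).card = 2 * k := by
  rw [Cyc, Finset.card_biUnion]
  · have h2 : ∀ i : ZMod k, (pA i ((fun _ => (0 : Fin 3)) i) ∪ {ret i}).card = 2 := by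
      intro i
      rw [pA_zero, Finset.card_union_of_disjoint (by simp [Prod.ext_iff, ret])]
      simp
    rw [Finset.sum_congr rfl (fun i _ => h2 i)]
    simp [Finset.card_univ, ZMod.card, mul_comm]
  · intro i _ j _ hij
    simp only [Finset.disjoint_left]
    intro e he he'
    exact hij (by rw [← mem_part_snd he, mem_part_snd he'])

def baseF (k m : ℕ) : ZMod (m + 1) → Fin 4 × ZMod k :=
  fun j => (⟨j.val % 2, by omega⟩, ((j.val / 2 : ℕ) : ZMod k))

lemma baseF_fst_val {m : ℕ} (j : ZMod (m + 1)) : (baseF k m j).1.val = j.val % 2 := rfl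
lemma baseF_snd {m : ℕ} (j : ZMod (m + 1)) : (baseF k m j).2 = ((j.val / 2 : ℕ) : ZMod k) := rfl

lemma isCycle_Cyc0 : IsCycle (Cyc (k := k) (fun _ => 0)) := by
  have hk : 0 < k := Nat.pos_of_ne_zero (NeZero.ne k)
  obtain ⟨m, hm⟩ : ∃ m, 2 * k = m + 1 := ⟨2 * k - 1, by omega⟩
  have hinj : Function.Injective (baseF k m) := by
    intro x y hxy
    have h1 : x.val % 2 = y.val % 2 := by
      rw [← baseF_fst_val (k := k) x, ← baseF_fst_val (k := k) y, hxy]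
    have h2 := congrArg Prod.snd hxy
    rw [baseF_snd, baseF_snd] at h2
    have hx : x.val < 2 * k := by rw [hm]; exact x.val_lt
    have hy : y.val < 2 * k := by rw [hm]; exact y.val_lt
    have h2' : x.val / 2 = y.val / 2 := by
      have := congrArg ZMod.val h2
      rwa [ZMod.val_cast_of_lt (by omega), ZMod.val_cast_of_lt (by omega)] at this
    exact ZMod.val_injective _ (by omega)
  refine ⟨m, baseF k m, hinj, ?_⟩
  symm
  apply Finset.eq_of_subset_of_card_le
  · intro e he
    rcases Finset.mem_image.1 he with ⟨j, -, rfl⟩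
    have htlt : j.val < 2 * k := by rw [hm]; exact j.val_lt
    have hsucc : (j + 1).val = (j.val + 1) % (2 * k) := by
      rw [ZMod.val_add, ZMod.val_one_eq_one_mod, hm,
        Nat.mod_eq_of_lt (show 1 < m + 1 by omega)]
    rcases Nat.even_or_odd j.val with he2 | he2
    · have hmod : j.val % 2 = 0 := Nat.even_iff.1 he2
      have e1 : (j + 1).val = j.val + 1 := by rw [hsucc]; exact Nat.mod_eq_of_lt (by omega)
      refine mem_Cyc.2 ⟨((j.val / 2 : ℕ) : ZMod k), Or.inl ?_⟩
      simp only [pA_zero, Finset.mem_singleton]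
      refine Prod.ext_iff.2 ⟨Prod.ext_iff.2 ⟨?_, ?_⟩, Prod.ext_iff.2 ⟨?_, ?_⟩⟩
      · exact Fin.ext (by rw [baseF_fst_val]; simpa using hmod)
      · exact baseF_snd j
      · exact Fin.ext (by rw [baseF_fst_val, e1]; simp; omega)
      · rw [baseF_snd, e1]
        congr 1
        omega
    · have hmod : j.val % 2 = 1 := Nat.odd_iff.1 he2
      refine mem_Cyc.2 ⟨((j.val / 2 : ℕ) : ZMod k), Or.inr ?_⟩
      rcases Nat.lt_or_ge (j.val + 1) (2 * k) with ht | ht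
      · have e1 : (j + 1).val = j.val + 1 := by rw [hsucc]; exact Nat.mod_eq_of_lt ht
        refine Prod.ext_iff.2 ⟨Prod.ext_iff.2 ⟨?_, ?_⟩, Prod.ext_iff.2 ⟨?_, ?_⟩⟩
        · exact Fin.ext (by rw [baseF_fst_val]; simpa [ret] using hmod)
        · exact baseF_snd j
        · exact Fin.ext (by rw [baseF_fst_val, e1]; simp [ret]; omega)
        · rw [baseF_snd, e1, show (j.val + 1) / 2 = j.val / 2 + 1 from by omega]
          show _ = ((j.val / 2 : ℕ) : ZMod k) + 1
          push_cast
          ring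
      · have ht' : j.val + 1 = 2 * k := by omega
        have e1 : (j + 1).val = 0 := by rw [hsucc, ht', Nat.mod_self]
        refine Prod.ext_iff.2 ⟨Prod.ext_iff.2 ⟨?_, ?_⟩, Prod.ext_iff.2 ⟨?_, ?_⟩⟩
        · exact Fin.ext (by rw [baseF_fst_val]; simpa [ret] using hmod)
        · exact baseF_snd j
        · exact Fin.ext (by rw [baseF_fst_val, e1]; simp [ret])
        · rw [baseF_snd, e1]
          have hq : j.val / 2 + 1 = k := by omega
          have h0 : ((j.val / 2 : ℕ) : ZMod k) + 1 = 0 := by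
            have h1 : ((j.val / 2 + 1 : ℕ) : ZMod k) = 0 := by
              rw [hq]; exact ZMod.natCast_self k
            push_cast at h1
            exact h1
          show _ = ((j.val / 2 : ℕ) : ZMod k) + 1
          rw [h0]
          simp [ret]
  · have harc : Function.Injective (fun j : ZMod (m + 1) => (baseF k m j, baseF k m (j + 1))) := by
      intro x y h
      exact hinj (congrArg Prod.fst h)
    rw [card_Cyc0, Finset.card_image_of_injective _ harc, Finset.card_univ, ZMod.card, hm]
section Splice
variable {W : Type} [DecidableEq W]

lemma IsCycle.splice {C : Finset (W × W)} (hC : IsCycle C)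
    {a b v : W} (hab : (a, b) ∈ C) (hv : ∀ e ∈ C, e.1 ≠ v) :
    IsCycle ((C.erase (a, b)) ∪ {(a, v), (v, b)}) := by
  classical
  obtain ⟨n, f, hf, rfl⟩ := hC
  obtain ⟨i₀, -, hi₀⟩ := Finset.mem_image.1 hab
  have ha : f i₀ = a := (Prod.ext_iff.1 hi₀).1
  have hb : f (i₀ + 1) = b := (Prod.ext_iff.1 hi₀).2
  set g : ZMod (n + 1) → W := fun i => f (i₀ + 1 + i) with hg
  have hginj : Function.Injective g := fun x y h => by
    have := hf h
    simpa using this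
  have hgarc : ∀ i : ZMod (n + 1),
      (g i, g (i + 1)) ∈ Finset.image (fun i => (f i, f (i + 1))) Finset.univ := by
    intro i
    refine Finset.mem_image.2 ⟨i₀ + 1 + i, Finset.mem_univ _, ?_⟩
    simp only [hg]
    rw [show i₀ + 1 + i + 1 = i₀ + 1 + (i + 1) from by ring]
  have hvg : ∀ i, g i ≠ v := fun i => hv _ (hgarc i)
  have hvf : ∀ j, f j ≠ v := by
    intro j
    have hj : f j = g (j - (i₀ + 1)) := by rw [hg]; congr 1; ring
    rw [hj]; exact hvg _
  have hN : ((n : ZMod (n + 1))) + 1 = 0 := by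
    have h1 : (((n + 1 : ℕ)) : ZMod (n + 1)) = 0 := ZMod.natCast_self _
    push_cast at h1
    exact h1
  have hgN : g ((n : ℕ) : ZMod (n + 1)) = a := by
    rw [hg, ← ha]
    exact congrArg f (by linear_combination hN)
  have hg0 : g 0 = b := by rw [hg, ← hb]; exact congrArg f (by ring)
  set F : ZMod (n + 1 + 1) → W :=
    fun j => if j.val < n + 1 then g ((j.val : ℕ) : ZMod (n + 1)) else v with hF
  have hFinj : Function.Injective F := by
    intro x y hxy
    have hx' : x.val < n + 1 + 1 := x.val_lt
    have hy' : y.val < n + 1 + 1 := y.val_lt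
    by_cases hx : x.val < n + 1 <;> by_cases hy : y.val < n + 1 <;>
      simp only [hF, if_pos, if_neg, hx, hy, if_true, if_false] at hxy
    · have := hginj hxy
      have h2 := congrArg ZMod.val this
      rw [ZMod.val_cast_of_lt hx, ZMod.val_cast_of_lt hy] at h2
      exact ZMod.val_injective _ h2
    · exact absurd hxy (hvg _)
    · exact absurd hxy.symm (hvg _)
    · exact ZMod.val_injective _ (by omega)
  refine ⟨n + 1, F, hFinj, ?_⟩
  symm
  apply Finset.eq_of_subset_of_card_le
  · intro e he
    rcases Finset.mem_image.1 he with ⟨j, -, rfl⟩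
    have hjlt : j.val < n + 1 + 1 := j.val_lt
    have hs : (j + 1).val = (j.val + 1) % (n + 1 + 1) := by
      rw [ZMod.val_add, ZMod.val_one_eq_one_mod,
        Nat.mod_eq_of_lt (show 1 < n + 1 + 1 by omega)]
    rcases lt_trichotomy j.val n with hj | hj | hj
    · have e1 : (j + 1).val = j.val + 1 := by rw [hs]; exact Nat.mod_eq_of_lt (by omega)
      have hFj : F j = g ((j.val : ℕ) : ZMod (n + 1)) := by
        simp only [hF]; rw [if_pos (by omega)]
      have hFj1 : F (j + 1) = g (((j.val : ℕ) : ZMod (n + 1)) + 1) := by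
        simp only [hF]; rw [if_pos (by omega : (j+1).val < n + 1)]
        congr 1
        rw [e1]
        push_cast
        ring
      refine Finset.mem_union_left _ (Finset.mem_erase.2 ⟨?_, by rw [hFj, hFj1]; exact hgarc _⟩)
      rw [hFj, hFj1]
      intro hcon
      have h1 : g ((j.val : ℕ) : ZMod (n + 1)) = a := (Prod.ext_iff.1 hcon).1
      rw [← hgN] at h1
      have h2 := congrArg ZMod.val (hginj h1)
      rw [ZMod.val_cast_of_lt (by omega), ZMod.val_cast_of_lt (by omega)] at h2
      omega
    · have e1 : (j + 1).val = n + 1 := by rw [hs, hj]; exact Nat.mod_eq_of_lt (by omega)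
      have hFj : F j = a := by
        simp only [hF]; rw [if_pos (by omega), hj, hgN]
      have hFj1 : F (j + 1) = v := by
        simp only [hF]; rw [if_neg (by omega)]
      rw [hFj, hFj1]
      exact Finset.mem_union_right _ (by simp)
    · have hj' : j.val = n + 1 := by omega
      have e1 : (j + 1).val = 0 := by rw [hs, hj']; exact Nat.mod_self _
      have hFj : F j = v := by simp only [hF]; rw [if_neg (by omega)]
      have hFj1 : F (j + 1) = b := by
        simp only [hF]; rw [if_pos (by omega), e1]
        simpa using hg0
      rw [hFj, hFj1]
      exact Finset.mem_union_right _ (by simp)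
  · have harcf : Function.Injective (fun i : ZMod (n + 1) => (f i, f (i + 1))) :=
      fun x y h => hf (congrArg Prod.fst h)
    have harcF : Function.Injective (fun j : ZMod (n + 1 + 1) => (F j, F (j + 1))) :=
      fun x y h => hFinj (congrArg Prod.fst h)
    have hcC : (Finset.image (fun i : ZMod (n + 1) => (f i, f (i + 1))) Finset.univ).card
        = n + 1 := by
      rw [Finset.card_image_of_injective _ harcf, Finset.card_univ, ZMod.card]
    have hav : (a, v) ∉ (Finset.image (fun i : ZMod (n + 1) => (f i, f (i + 1))) Finset.univ) := by
      intro hmem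
      rcases Finset.mem_image.1 hmem with ⟨i, -, hi⟩
      exact hvf (i + 1) (Prod.ext_iff.1 hi).2
    have hvb : (v, b) ∉ (Finset.image (fun i : ZMod (n + 1) => (f i, f (i + 1))) Finset.univ) := by
      intro hmem
      rcases Finset.mem_image.1 hmem with ⟨i, -, hi⟩
      exact hvf i (Prod.ext_iff.1 hi).1
    have hdisj : Disjoint
        ((Finset.image (fun i : ZMod (n + 1) => (f i, f (i + 1))) Finset.univ).erase (a, b))
        ({(a, v), (v, b)} : Finset (W × W)) := by
      rw [Finset.disjoint_right]
      intro e hee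
      rcases Finset.mem_insert.1 hee with h | h
      · subst h; exact fun hcon => hav (Finset.mem_of_mem_erase hcon)
      · rw [Finset.mem_singleton.1 h]
        exact fun hcon => hvb (Finset.mem_of_mem_erase hcon)
    rw [Finset.card_union_of_disjoint hdisj, Finset.card_erase_of_mem hab, hcC,
      Finset.card_pair (by intro hcon; exact hvf i₀ (ha ▸ (Prod.ext_iff.1 hcon).1)),
      Finset.card_image_of_injective _ harcF, Finset.card_univ, ZMod.card]
    omega

end Splice
lemma Cyc_eq_splice {c : ZMod k → Fin 3} {j : ZMod k} {mv : Fin 4}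
    (hm : (c j = 1 ∧ mv = 2) ∨ (c j = 2 ∧ mv = 3)) :
    Cyc c = ((Cyc (Function.update c j 0)).erase (((0 : Fin 4), j), ((1 : Fin 4), j)))
      ∪ {(((0 : Fin 4), j), (mv, j)), ((mv, j), ((1 : Fin 4), j))} := by
  ext e
  constructor
  · intro he
    rcases mem_Cyc.1 he with ⟨i, hp | hp⟩
    · by_cases hij : i = j
      · subst hij
        refine Finset.mem_union_right _ ?_
        rcases hm with ⟨h1, h2⟩ | ⟨h1, h2⟩ <;> subst h2 <;> rw [h1] at hp
        · rw [pA_one] at hp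
          simpa using hp
        · rw [pA_two] at hp
          simpa using hp
      · refine Finset.mem_union_left _ (Finset.mem_erase.2 ⟨?_, ?_⟩)
        · intro hcon
          exact hij (by rw [← mem_pA_snd hp, hcon])
        · exact mem_Cyc.2 ⟨i, Or.inl (by rwa [Function.update_of_ne hij])⟩
    · subst hp
      refine Finset.mem_union_left _ (Finset.mem_erase.2 ⟨?_, ret_mem_Cyc i⟩)
      simp [ret, Prod.ext_iff]
  · intro he
    rcases Finset.mem_union.1 he with h | h
    · obtain ⟨hne, hmem⟩ := Finset.mem_erase.1 h
      rcases mem_Cyc.1 hmem with ⟨i, hp | hp⟩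
      · by_cases hij : i = j
        · subst hij
          rw [Function.update_self, pA_zero, Finset.mem_singleton] at hp
          exact absurd hp hne
        · rw [Function.update_of_ne hij] at hp
          exact mem_Cyc.2 ⟨i, Or.inl hp⟩
      · subst hp; exact ret_mem_Cyc i
    · refine mem_Cyc.2 ⟨j, Or.inl ?_⟩
      rcases hm with ⟨h1, h2⟩ | ⟨h1, h2⟩ <;> subst h2 <;> rw [h1]
      · rw [pA_one]; simpa using h
      · rw [pA_two]; simpa using h

lemma isCycle_Cyc (c : ZMod k → Fin 3) : IsCycle (Cyc c) := by
  classical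
  suffices H : ∀ (T : Finset (ZMod k)) (c : ZMod k → Fin 3),
      (∀ i, c i ≠ 0 → i ∈ T) → IsCycle (Cyc c) from H Finset.univ c (fun i _ => Finset.mem_univ i)
  intro T
  induction T using Finset.induction_on with
  | empty =>
      intro c hc
      have hc0 : c = fun _ => 0 := funext fun i => by
        by_contra h
        simpa using hc i h
      rw [hc0]
      exact isCycle_Cyc0
  | @insert j T hj ih =>
      intro c hc
      by_cases hcj : c j = 0
      · refine ih c (fun i hi => ?_)
        rcases Finset.mem_insert.1 (hc i hi) with h | h
        · subst h; exact absurd hcj hi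
        · exact h
      · set c' := Function.update c j 0 with hc'
        have hIH : IsCycle (Cyc c') := by
          refine ih c' (fun i hi => ?_)
          have hij : i ≠ j := fun h => by subst h; simp [hc', Function.update_self] at hi
          have hci : c i ≠ 0 := by rwa [hc', Function.update_of_ne hij] at hi
          rcases Finset.mem_insert.1 (hc i hci) with h | h
          · exact absurd h hij
          · exact h
        have hdir : ((((0 : Fin 4), j)), ((1 : Fin 4), j)) ∈ Cyc c' :=
          dir_mem_Cyc_iff.2 (by rw [hc', Function.update_self])
        rcases fin3_cases (c j) with h | h | h
        · exact absurd h hcj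
        · have hs := hIH.splice hdir (not_src2 (c := c') (j := j)
            (by rw [hc', Function.update_self]; decide))
          rw [Cyc_eq_splice (c := c) (j := j) (mv := 2) (Or.inl ⟨h, rfl⟩), ← hc']
          exact hs
        · have hs := hIH.splice hdir (not_src3 (c := c') (j := j)
            (by rw [hc', Function.update_self]; decide))
          rw [Cyc_eq_splice (c := c) (j := j) (mv := 3) (Or.inr ⟨h, rfl⟩), ← hc']
          exact hs
lemma kR_pos : (1 : ℝ) ≤ (k : ℝ) := by
  exact_mod_cast Nat.one_le_iff_ne_zero.2 (NeZero.ne k)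

lemma weight_Cyc0 : ∑ e ∈ Cyc (k := k) (fun _ => 0), gw k e = -2 * k := by
  rw [weight_Cyc]
  simp [Finset.card_univ, ZMod.card]
  ring

lemma weight_pos_of_ne {c : ZMod k → Fin 3} {i₀ : ZMod k} (h : c i₀ ≠ 0) :
    0 < ∑ e ∈ Cyc c, gw k e := by
  rw [weight_Cyc, ← Finset.add_sum_erase _ _ (Finset.mem_univ i₀), if_neg h]
  have hb : ((Finset.univ.erase i₀).card : ℝ) * (-2 : ℝ)
      ≤ ∑ i ∈ Finset.univ.erase i₀, (if c i = 0 then (-2 : ℝ) else 4 * k - 1) := by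
    calc ((Finset.univ.erase i₀).card : ℝ) * (-2 : ℝ)
        = ∑ _i ∈ Finset.univ.erase i₀, (-2 : ℝ) := by
          rw [Finset.sum_const, nsmul_eq_mul]
      _ ≤ _ := Finset.sum_le_sum (fun i _ => by
          split
          · exact le_refl _
          · have := kR_pos (k := k); linarith)
  have hcard : ((Finset.univ.erase i₀).card : ℝ) = (k : ℝ) - 1 := by
    rw [Finset.card_erase_of_mem (Finset.mem_univ _), Finset.card_univ, ZMod.card]
    have : 1 ≤ k := Nat.one_le_iff_ne_zero.2 (NeZero.ne k)
    push_cast [Nat.cast_sub this]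
    ring
  rw [hcard] at hb
  have := kR_pos (k := k)
  nlinarith [hb]

/-- single-detour choice function -/
def sgl (i : ZMod k) (ε : Fin 3) : ZMod k → Fin 3 := fun j => if j = i then ε else 0

lemma sgl_self {i : ZMod k} {ε : Fin 3} : sgl i ε i = ε := by simp [sgl]

lemma weight_sgl {i : ZMod k} {ε : Fin 3} (hε : ε ≠ 0) :
    ∑ e ∈ Cyc (sgl i ε), gw k e = 2 * k + 1 := by
  rw [weight_Cyc]
  have hterm : ∀ j : ZMod k, (if sgl i ε j = 0 then (-2 : ℝ) else 4 * k - 1)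
      = -2 + (if j = i then (4 * (k : ℝ) + 1) else 0) := by
    intro j
    by_cases hj : j = i
    · subst hj
      rw [if_neg (show ¬ (sgl j ε j = 0) from by rw [sgl_self]; exact hε), if_pos rfl]
      ring
    · rw [if_neg hj, if_pos (by simp [sgl, hj])]
      ring
  rw [Finset.sum_congr rfl (fun j _ => hterm j), Finset.sum_add_distrib,
    Finset.sum_ite_eq' Finset.univ i (fun _ => 4 * (k : ℝ) + 1)]
  simp [Finset.card_univ, ZMod.card]
  ring

lemma Cyc_sgl_subset_union {c : ZMod k → Fin 3} {i₀ : ZMod k} {ε : Fin 3} (hε : ε = c i₀) :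
    Cyc (sgl i₀ ε) ⊆ Cyc (fun _ => 0) ∪ Cyc c := by
  intro e he
  rcases mem_Cyc.1 he with ⟨i, hp | hp⟩
  · by_cases hi : i = i₀
    · subst hi
      rw [sgl_self, hε] at hp
      exact Finset.mem_union_right _ (pA_mem_Cyc hp)
    · rw [show sgl i₀ ε i = 0 from by simp [sgl, hi], pA_zero, Finset.mem_singleton] at hp
      subst hp
      exact Finset.mem_union_left _ (dir_mem_Cyc_iff.2 rfl)
  · subst hp
    exact Finset.mem_union_left _ (ret_mem_Cyc i)

lemma twoCycle_char {C₁ C₂ : Finset ((Fin 4 × ZMod k) × (Fin 4 × ZMod k))}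
    (h : IsTwoCycle (gE k) (gw k) C₁ C₂) :
    ∃ (i : ZMod k) (ε : Fin 3), ε ≠ 0 ∧ C₁ = Cyc (fun _ => 0) ∧ C₂ = Cyc (sgl i ε) := by
  obtain ⟨h1, h2, hs1, hs2, hw1, hw2, hmin⟩ := h
  obtain ⟨c₁, rfl⟩ := classify h1 hs1
  obtain ⟨c₂, rfl⟩ := classify h2 hs2
  have hc₁ : c₁ = fun _ => 0 := by
    funext i
    by_contra hi
    exact absurd hw1 (not_lt.2 (le_of_lt (weight_pos_of_ne hi)))
  obtain ⟨i₀, hi₀⟩ : ∃ i, c₂ i ≠ 0 := by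
    by_contra hall
    push_neg at hall
    have hcc : c₂ = fun _ => 0 := funext fun i => not_not.1 (by simpa using hall i)
    rw [hcc, weight_Cyc0] at hw2
    have := kR_pos (k := k)
    linarith
  have hone : ∀ i₁, i₁ ≠ i₀ → c₂ i₁ = 0 := by
    intro i₁ hne
    by_contra hi₁
    have hD : IsCycle (Cyc (sgl i₀ (c₂ i₀))) := isCycle_Cyc _
    have hsub : Cyc (sgl i₀ (c₂ i₀)) ⊆ Cyc c₁ ∪ Cyc c₂ := by
      rw [hc₁]
      exact Cyc_sgl_subset_union rfl
    rcases hmin _ hD hsub with hEq | hEq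
    · have := Cyc_ext hEq
      rw [hc₁] at this
      have h0 := congrFun this i₀
      rw [sgl_self] at h0
      exact hi₀ h0
    · have := Cyc_ext hEq
      have h0 := congrFun this i₁
      rw [show sgl i₀ (c₂ i₀) i₁ = 0 from by simp [sgl, hne]] at h0
      exact hi₁ h0.symm
  refine ⟨i₀, c₂ i₀, hi₀, by rw [hc₁], ?_⟩
  congr 1
  funext j
  by_cases hj : j = i₀
  · subst hj; rw [sgl_self]
  · rw [hone j hj, show sgl i₀ (c₂ i₀) j = 0 from by simp [sgl, hj]]

lemma twoCycle_of {i : ZMod k} {ε : Fin 3} (hε : ε ≠ 0) :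
    IsTwoCycle (gE k) (gw k) (Cyc (fun _ => 0)) (Cyc (sgl i ε)) := by
  refine ⟨isCycle_Cyc _, isCycle_Cyc _, Cyc_subset_gE, Cyc_subset_gE, ?_, ?_, ?_⟩
  · rw [weight_Cyc0]
    have := kR_pos (k := k)
    linarith
  · rw [weight_sgl hε]
    have := kR_pos (k := k)
    linarith
  · intro C hC hCsub
    have hCgE : C ⊆ gE k :=
      hCsub.trans (Finset.union_subset Cyc_subset_gE Cyc_subset_gE)
    obtain ⟨c', rfl⟩ := classify hC hCgE
    have hkey : ∀ j, c' j = 0 ∨ (j = i ∧ c' j = ε) := by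
      intro j
      rcases fin3_cases (c' j) with h | h | h
      · exact Or.inl h
      · have harc := hCsub (in2_mem_Cyc_iff.2 h)
        rcases Finset.mem_union.1 harc with hm | hm
        · exact absurd (in2_mem_Cyc_iff.1 hm) (by decide)
        · have := in2_mem_Cyc_iff.1 hm
          by_cases hji : j = i
          · subst hji
            rw [sgl_self] at this
            exact Or.inr ⟨rfl, h.trans this.symm⟩
          · rw [show sgl i ε j = 0 from by simp [sgl, hji]] at this
            exact absurd this (by decide)
      · have harc := hCsub (in3_mem_Cyc_iff.2 h)
        rcases Finset.mem_union.1 harc with hm | hm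
        · exact absurd (in3_mem_Cyc_iff.1 hm) (by decide)
        · have := in3_mem_Cyc_iff.1 hm
          by_cases hji : j = i
          · subst hji
            rw [sgl_self] at this
            exact Or.inr ⟨rfl, h.trans this.symm⟩
          · rw [show sgl i ε j = 0 from by simp [sgl, hji]] at this
            exact absurd this (by decide)
    by_cases hci : c' i = 0
    · refine Or.inl (congrArg Cyc (funext fun j => ?_))
      rcases hkey j with h | ⟨rfl, h⟩
      · exact h
      · exact absurd hci (by rw [h]; exact hε)
    · refine Or.inr (congrArg Cyc (funext fun j => ?_))
      rcases hkey j with h | ⟨rfl, h⟩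
      · by_cases hji : j = i
        · subst hji; exact absurd h hci
        · rw [h]; simp [sgl, hji]
      · rw [h, sgl_self]
theorem stmt_18' (k : ℕ) (hk : 0 < k) [NeZero k] :
    2 ^ k ≤ Set.ncard {C : Finset ((Fin 4 × ZMod k) × (Fin 4 × ZMod k)) |
        IsCycle C ∧ C ⊆ gE k ∧ 0 < ∑ e ∈ C, gw k e} ∧
    Set.ncard {p : Finset ((Fin 4 × ZMod k) × (Fin 4 × ZMod k)) ×
        Finset ((Fin 4 × ZMod k) × (Fin 4 × ZMod k)) |
        IsTwoCycle (gE k) (gw k) p.1 p.2} = 2 * k := by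
  classical
  constructor
  · set F : Finset (ZMod k) → Finset ((Fin 4 × ZMod k) × (Fin 4 × ZMod k)) :=
      fun S => Cyc (fun i => if i ∈ S then (1 : Fin 3) else 2) with hF
    have hFinj : Function.Injective F := by
      intro S S' h
      simp only [hF] at h
      have hc := Cyc_ext h
      ext i
      have hx := congrFun hc i
      by_cases hiS : i ∈ S <;> by_cases hiS' : i ∈ S' <;>
        simp only [hiS, hiS', if_true, if_false] at hx <;> simp [hiS, hiS']
      · exact absurd hx (by decide)
      · exact absurd hx (by decide)
    have hsub : ↑(Finset.univ.image F) ⊆ {C : Finset ((Fin 4 × ZMod k) × (Fin 4 × ZMod k)) |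
        IsCycle C ∧ C ⊆ gE k ∧ 0 < ∑ e ∈ C, gw k e} := by
      intro C hc
      simp only [Finset.coe_image, Finset.coe_univ, Set.image_univ, Set.mem_range] at hc
      obtain ⟨S, rfl⟩ := hc
      refine ⟨isCycle_Cyc _, Cyc_subset_gE, weight_pos_of_ne (i₀ := 0) ?_⟩
      show (if (0 : ZMod k) ∈ S then (1 : Fin 3) else 2) ≠ 0
      split_ifs <;> decide
    calc (2 : ℕ) ^ k = (Finset.univ.image F).card := by
          rw [Finset.card_image_of_injective _ hFinj, Finset.card_univ,
            Fintype.card_finset, ZMod.card]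
      _ = (↑(Finset.univ.image F) : Set _).ncard := (Set.ncard_coe_finset _).symm
      _ ≤ _ := Set.ncard_le_ncard hsub (Set.toFinite _)
  · set G : ZMod k × Fin 2 →
        Finset ((Fin 4 × ZMod k) × (Fin 4 × ZMod k)) ×
          Finset ((Fin 4 × ZMod k) × (Fin 4 × ZMod k)) :=
      fun q => (Cyc (k := k) (fun _ => 0), Cyc (sgl q.1 (if q.2 = 0 then (1 : Fin 3) else 2)))
      with hG
    have hval : ∀ q : ZMod k × Fin 2, (if q.2 = 0 then (1 : Fin 3) else 2) ≠ 0 := by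
      intro q; split_ifs <;> decide
    have hset : {p : Finset ((Fin 4 × ZMod k) × (Fin 4 × ZMod k)) ×
        Finset ((Fin 4 × ZMod k) × (Fin 4 × ZMod k)) |
        IsTwoCycle (gE k) (gw k) p.1 p.2} = ↑(Finset.univ.image G) := by
      ext p
      simp only [Set.mem_setOf_eq, Finset.coe_image, Finset.coe_univ, Set.image_univ,
        Set.mem_range]
      constructor
      · intro hp
        obtain ⟨i, ε, hε, h1, h2⟩ := twoCycle_char hp
        rcases fin3_cases ε with h | h | h
        · exact absurd h hε
        · refine ⟨(i, 0), ?_⟩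
          simp only [hG]
          refine Prod.ext_iff.2 ⟨h1.symm, ?_⟩
          show Cyc (sgl i 1) = p.2
          rw [h2, h]
        · refine ⟨(i, 1), ?_⟩
          simp only [hG]
          refine Prod.ext_iff.2 ⟨h1.symm, ?_⟩
          show Cyc (sgl i 2) = p.2
          rw [h2, h]
      · rintro ⟨q, rfl⟩
        simp only [hG]
        exact twoCycle_of (hval q)
    have hGinj : Function.Injective G := by
      rintro ⟨i1, e1⟩ ⟨i2, e2⟩ h
      have h2 := congrArg Prod.snd h
      simp only [hG] at h2
      have hc := Cyc_ext h2
      have hi : i1 = i2 := by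
        by_contra hqq
        have hx := congrFun hc i1
        rw [sgl_self,
          show sgl i2 (if e2 = 0 then (1 : Fin 3) else 2) i1 = 0 from by simp [sgl, hqq]] at hx
        exact hval (i1, e1) hx
      subst hi
      have hx := congrFun hc i1
      rw [sgl_self, sgl_self] at hx
      have he : e1 = e2 := by
        have fin2 : ∀ a : Fin 2, a = 0 ∨ a = 1 := by decide
        rcases fin2 e1 with ha | ha <;> rcases fin2 e2 with hb | hb <;> rw [ha, hb] <;>
          rw [ha, hb] at hx <;>
          first
            | rfl
            | simp at hx
      rw [he]
    rw [hset, Set.ncard_coe_finset, Finset.card_image_of_injective _ hGinj, Finset.card_univ,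
      Fintype.card_prod, ZMod.card, Fintype.card_fin, mul_comm]

end Dev

/-- the graph `(gE k, gw k)` has at least `2^k` positive-weight
simple directed cycles, but exactly `2k` 2-cycles. -/
theorem stmt_18 (k : ℕ) (hk : 0 < k) [NeZero k] :
    2 ^ k ≤ Set.ncard {C : Finset ((Fin 4 × ZMod k) × (Fin 4 × ZMod k)) |
        IsCycle C ∧ C ⊆ gE k ∧ 0 < ∑ e ∈ C, gw k e} ∧
    Set.ncard {p : Finset ((Fin 4 × ZMod k) × (Fin 4 × ZMod k)) ×
        Finset ((Fin 4 × ZMod k) × (Fin 4 × ZMod k)) |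
        IsTwoCycle (gE k) (gw k) p.1 p.2} = 2 * k := by
  exact stmt_18' k hk
end
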